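/- arXiv:1806.09098 — 8 statements merged into one kernel-verified Lean document; each statement's English description precedes it below -/
import Mathlib

section
/- Let {K_α, Λ_α}_{α∈Λ} be an f.r.f.t. nested structure of K. Then for every α ∈ Λ, the set C_α = ⋃_{β≠β'∈Λ_α} K_β ∩ K_{β'} is finite, and K_α ∖ C_α is the disjoint union over β ∈ Λ_α of the sets K_β ∖ C_α. -/
open Set

noncomputable section

/-- Points of `ℝ^d`. -/
abbrev Pt (d : ℕ) := EuclideanSpace ℝ (Fin d)

/-- `f` is a similitude: it scales all distances by some ratio `r > 0`. -/
def IsSimilitude {d : ℕ} (f : Pt d → Pt d) : Prop :=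
  ∃ r : ℝ, 0 < r ∧ ∀ x y, dist (f x) (f y) = r * dist x y

/-- The levels `Λ^{(k)}_ϑ` of a nested structure: `Λ^{(0)}_ϑ = {ϑ}` and
`Λ^{(k+1)}_ϑ = ⋃_{β ∈ Λ^{(k)}_ϑ} Λ_β`. -/
def levels {Λ : Type} (child : Λ → Set Λ) (root : Λ) : ℕ → Set Λ
  | 0 => {root}
  | k + 1 => ⋃ β ∈ levels child root k, child β

/-- The set of parents of `α`. -/
def parentSet {Λ : Type} (child : Λ → Set Λ) (α : Λ) : Set Λ := {γ | α ∈ child γ}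

/-- `P^n(α)`: the set of `n`-fold parents of `α` (`P^0(α) = {α}`). -/
def parentIter {Λ : Type} (child : Λ → Set Λ) : ℕ → Λ → Set Λ
  | 0, α => {α}
  | n + 1, α => ⋃ β ∈ parentIter child n α, parentSet child β

/-- `C_α = ⋃_{β ≠ β' ∈ Λ_α} K_β ∩ K_{β'}`. -/
def Cset {d : ℕ} {Λ : Type} (Kα : Λ → Set (Pt d)) (child : Λ → Set Λ) (α : Λ) :
    Set (Pt d) :=
  ⋃ β ∈ child α, ⋃ β' ∈ child α, ⋃ (_ : β ≠ β'), (Kα β ∩ Kα β')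

/-- `α ∼ β`: there is a similitude mapping `K_α` onto `K_β`. -/
def simRel {d : ℕ} {Λ : Type} (Kα : Λ → Set (Pt d)) (α β : Λ) : Prop :=
  ∃ f : Pt d → Pt d, IsSimilitude f ∧ f '' Kα α = Kα β

/-- The boundary `V_α = ⋃_{β∼α, β≠ϑ} φ_{β,α}(K_β ∩ ⋃_{n≥1} ⋃_{γ∈P^n(β)} C_γ)`. -/
def Vset {d : ℕ} {Λ : Type} (Kα : Λ → Set (Pt d)) (child : Λ → Set Λ)
    (φ : Λ → Λ → Pt d → Pt d) (root α : Λ) : Set (Pt d) :=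
  ⋃ β, ⋃ (_ : simRel Kα β α ∧ β ≠ root),
    φ β α '' (Kα β ∩ ⋃ n, ⋃ (_ : 1 ≤ n), ⋃ γ ∈ parentIter child n β, Cset Kα child γ)

/-- A nested structure `{K_α, Λ_α}_{α ∈ Λ}` of the (connected self-similar) set `K`:
a countable family of distinct compact connected subsets of `K`, none a singleton,
with a root `ϑ` such that `K_ϑ = K`, each `K_α` the union of its (at least two)
children, and every non-root index an offspring of the root. -/
structure NestedStructure (d : ℕ) (K : Set (Pt d)) (Λ : Type) : Type where
  Kα : Λ → Set (Pt d)
  child : Λ → Set Λ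
  root : Λ
  countable : Countable Λ
  inj : Function.Injective Kα
  compact : ∀ α, IsCompact (Kα α)
  connected : ∀ α, IsConnected (Kα α)
  not_singleton : ∀ α, ¬ ∃ x, Kα α = {x}
  subset_K : ∀ α, Kα α ⊆ K
  root_eq : Kα root = K
  child_finite : ∀ α, (child α).Finite
  child_nontrivial : ∀ α, (child α).Nontrivial
  child_union : ∀ α, Kα α = ⋃ β ∈ child α, Kα β
  offspring : ∀ α, α ≠ root → ∃ k, α ∈ levels child root k

/-- A finitely ramified of finite type (f.r.f.t.) nested structure: a nested structure
together with a coherent family of similitudes `φ_{α,β}` for equivalent indices,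
satisfying (A1) finitely many `∼`-equivalence classes, (A2) compatible one-to-one
correspondence between children of equivalent indices, and (A3) all boundaries `V_α`
finite. -/
structure FRFTStructure (d : ℕ) (K : Set (Pt d)) (Λ : Type)
    extends NestedStructure d K Λ where
  φ : Λ → Λ → Pt d → Pt d
  φ_isSim : ∀ α β, simRel Kα α β → IsSimilitude (φ α β)
  φ_maps : ∀ α β, simRel Kα α β → φ α β '' Kα α = Kα β
  φ_refl : ∀ α, φ α α = id
  φ_comp : ∀ α β γ, simRel Kα α γ → simRel Kα γ β → (φ γ β) ∘ (φ α γ) = φ α β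
  A1 : (Set.range fun α => {β | simRel Kα α β}).Finite
  A2 : ∀ α α', simRel Kα α α' → ∀ β ∈ child α,
      ∃! β', β' ∈ child α' ∧ simRel Kα β β' ∧ φ β β' = φ α α'
  A3 : ∀ α, (Vset Kα child φ root α).Finite

lemma simRel_refl {d : ℕ} {Λ : Type} (Kα : Λ → Set (Pt d)) (α : Λ) : simRel Kα α α :=
  ⟨id, ⟨1, one_pos, by simp⟩, Set.image_id _⟩

lemma inter_Cset_subset_Vset {d : ℕ} {K : Set (Pt d)} {Λ : Type}
    (S : FRFTStructure d K Λ) {α β : Λ} (hβ : β ∈ S.child α) (hβr : β ≠ S.root) :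
    S.Kα β ∩ Cset S.Kα S.child α ⊆ Vset S.Kα S.child S.φ S.root β := by
  intro x hx
  refine Set.mem_iUnion.2 ⟨β, Set.mem_iUnion.2 ⟨⟨simRel_refl _ _, hβr⟩, ?_⟩⟩
  rw [S.φ_refl, Set.image_id]
  refine ⟨hx.1, Set.mem_iUnion.2 ⟨1, Set.mem_iUnion.2 ⟨le_refl 1, ?_⟩⟩⟩
  refine Set.mem_biUnion (show α ∈ parentIter S.child 1 β from ?_) hx.2
  simp [parentIter, parentSet, hβ]

lemma root_not_child {d : ℕ} {K : Set (Pt d)} {Λ : Type}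
    (S : FRFTStructure d K Λ) (α : Λ) : S.root ∉ S.child α := by
  intro hroot
  -- K ⊆ K_α so K_α = K and α = root
  have hsub : S.Kα S.root ⊆ S.Kα α := by
    rw [S.child_union α]; exact Set.subset_biUnion_of_mem hroot
  have hKαK : S.Kα α = K :=
    Set.Subset.antisymm (S.subset_K α) (fun z hz => hsub (show z ∈ S.Kα S.root from S.root_eq.symm ▸ hz))
  obtain ⟨x, hx, y, hy, hxy⟩ := S.child_nontrivial α
  obtain ⟨β, hβ, hβr⟩ : ∃ β ∈ S.child α, β ≠ S.root := by
    rcases eq_or_ne x S.root with rfl | h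
    · exact ⟨y, hy, fun h => hxy h.symm⟩
    · exact ⟨x, hx, h⟩
  -- K_β ⊆ C_α
  have hKC : S.Kα β ⊆ Cset S.Kα S.child α := by
    intro z hz
    refine Set.mem_biUnion hβ (Set.mem_biUnion hroot ?_)
    exact Set.mem_iUnion.2 ⟨hβr, hz, (S.subset_K β).trans S.root_eq.symm.subset hz⟩
  have hfin : (S.Kα β).Finite :=
    (S.A3 β).subset ((Set.subset_inter Set.Subset.rfl hKC).trans
      (inter_Cset_subset_Vset S hβ hβr))
  -- but K_β is infinite
  have hnt : (S.Kα β).Nontrivial := by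
    rcases (S.connected β).nonempty with ⟨z, hz⟩
    rcases Set.eq_singleton_or_nontrivial hz with h | h
    · exact absurd ⟨z, h⟩ (S.not_singleton β)
    · exact h
  exact ((S.connected β).isPreconnected.infinite_of_nontrivial hnt) hfin

/-- **Proposition 2.3(a).** For an f.r.f.t. nested structure of a connected self-similar
set `K` (associated with an IFS of contractive similitudes `F_i` with ratios `c_i`),
each `C_α` is finite and `K_α ∖ C_α` is the disjoint union of the sets
`K_β ∖ C_α`, `β ∈ Λ_α`. -/
theorem stmt1 {d N : ℕ} (hN : 2 ≤ N) (F : Fin N → Pt d → Pt d) (c : Fin N → ℝ)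
    (hc : ∀ i, 0 < c i ∧ c i < 1)
    (hF : ∀ i x y, dist (F i x) (F i y) = c i * dist x y)
    (K : Set (Pt d)) (hKc : IsCompact K) (hKne : K.Nonempty)
    (hself : K = ⋃ i, F i '' K) (hconn : IsConnected K)
    {Λ : Type} (S : FRFTStructure d K Λ) (α : Λ) :
    (Cset S.Kα S.child α).Finite ∧
    (S.Kα α \ Cset S.Kα S.child α
      = ⋃ β ∈ S.child α, (S.Kα β \ Cset S.Kα S.child α)) ∧
    (∀ β ∈ S.child α, ∀ β' ∈ S.child α, β ≠ β' →
      Disjoint (S.Kα β \ Cset S.Kα S.child α) (S.Kα β' \ Cset S.Kα S.child α)) := by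
  constructor
  · -- finiteness of C_α
    have hcov : Cset S.Kα S.child α ⊆
        ⋃ β ∈ S.child α, (S.Kα β ∩ Cset S.Kα S.child α) := by
      intro x hx
      rcases Set.mem_iUnion₂.1 hx with ⟨β, hβ, hx'⟩
      rcases Set.mem_iUnion₂.1 hx' with ⟨β', hβ', hx''⟩
      rcases Set.mem_iUnion.1 hx'' with ⟨_, hxm⟩
      exact Set.mem_biUnion hβ ⟨hxm.1, hx⟩
    refine Set.Finite.subset (Set.Finite.biUnion (S.child_finite α) fun β hβ => ?_) hcov
    have hβr : β ≠ S.root := fun h => root_not_child S α (h ▸ hβ)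
    exact (S.A3 β).subset (inter_Cset_subset_Vset S hβ hβr)
  constructor
  · rw [S.child_union α]
    ext x
    simp only [Set.mem_diff, Set.mem_iUnion]
    tauto
  · intro β hβ β' hβ' hne
    refine Set.disjoint_left.2 fun x hx hx' => ?_
    exact hx.2 (Set.mem_biUnion hβ (Set.mem_biUnion hβ'
      (Set.mem_iUnion.2 ⟨hne, hx.1, hx'.1⟩)))
end
end

section
/- Let {K_α, Λ_α}_{α∈Λ} be an f.r.f.t. nested structure of K. Then for every α ∈ Λ and all distinct β, β' ∈ Λ_α, one has K_β ∩ K_{β'} = V_β ∩ V_{β'}. -/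
open Set

noncomputable section

section Aux

lemma Kα_infinite {d : ℕ} {K : Set (Pt d)} {Λ : Type} (S : FRFTStructure d K Λ) (α : Λ) :
    (S.Kα α).Infinite := by
  apply (S.connected α).isPreconnected.infinite_of_nontrivial
  rcases (S.connected α).nonempty with ⟨x, hx⟩
  by_contra h
  rw [Set.not_nontrivial_iff] at h
  exact S.not_singleton α ⟨x, h.eq_singleton_of_mem hx⟩

lemma Vset_subset {d : ℕ} {K : Set (Pt d)} {Λ : Type} (S : FRFTStructure d K Λ) (β : Λ) :
    Vset S.Kα S.child S.φ S.root β ⊆ S.Kα β := by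
  intro x hx
  simp only [Vset, Set.mem_iUnion] at hx
  obtain ⟨δ, ⟨hsim, -⟩, hx⟩ := hx
  have := S.φ_maps δ β hsim
  rw [← this]
  exact Set.image_mono Set.inter_subset_left hx

lemma mem_Vset {d : ℕ} {K : Set (Pt d)} {Λ : Type} (S : FRFTStructure d K Λ)
    {α β β' : Λ} (hβ : β ∈ S.child α) (hβ' : β' ∈ S.child α) (hne : β ≠ β')
    (hroot : β ≠ S.root) {x : Pt d} (hx : x ∈ S.Kα β) (hx' : x ∈ S.Kα β') :
    x ∈ Vset S.Kα S.child S.φ S.root β := by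
  simp only [Vset, Set.mem_iUnion]
  refine ⟨β, ⟨simRel_refl _ β, hroot⟩, ?_⟩
  rw [S.φ_refl, Set.image_id]
  refine ⟨hx, ?_⟩
  simp only [Set.mem_iUnion]
  refine ⟨1, le_refl 1, α, ?_, ?_⟩
  · simp [parentIter, parentSet, hβ]
  · simp only [Cset, Set.mem_iUnion]
    exact ⟨β, hβ, β', hβ', hne, hx, hx'⟩

lemma child_ne_root {d : ℕ} {K : Set (Pt d)} {Λ : Type} (S : FRFTStructure d K Λ)
    {α β : Λ} (hβ : β ∈ S.child α) : β ≠ S.root := by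
  intro h
  subst h
  -- Then K ⊆ K_α ⊆ K, so α = root, so root ∈ child root.
  have hsub : S.Kα α = S.Kα S.root := by
    apply Set.Subset.antisymm
    · rw [S.root_eq]; exact S.subset_K α
    · rw [S.child_union α]; exact Set.subset_biUnion_of_mem hβ
  have hα : α = S.root := S.inj hsub
  subst hα
  -- pick another child γ ≠ root
  obtain ⟨a, ha, b, hb, hab⟩ := S.child_nontrivial S.root
  have : ∃ γ ∈ S.child S.root, γ ≠ S.root := by
    rcases eq_or_ne a S.root with rfl | h'
    · exact ⟨b, hb, hab.symm⟩
    · exact ⟨a, ha, h'⟩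
  obtain ⟨γ, hγ, hγne⟩ := this
  -- every point of K_γ is in V_γ
  have hsubV : S.Kα γ ⊆ Vset S.Kα S.child S.φ S.root γ := by
    intro x hx
    exact mem_Vset S hγ hβ hγne hγne hx (by rw [S.root_eq]; exact S.subset_K γ hx)
  exact Kα_infinite S γ ((S.A3 γ).subset hsubV)

end Aux

/-- **Proposition 2.3(b).** For an f.r.f.t. nested structure of a connected self-similar
set `K`, for every `α` and all distinct children `β, β' ∈ Λ_α`,
`K_β ∩ K_{β'} = V_β ∩ V_{β'}`. -/
theorem stmt2 {d N : ℕ} (hN : 2 ≤ N) (F : Fin N → Pt d → Pt d) (c : Fin N → ℝ)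
    (hc : ∀ i, 0 < c i ∧ c i < 1)
    (hF : ∀ i x y, dist (F i x) (F i y) = c i * dist x y)
    (K : Set (Pt d)) (hKc : IsCompact K) (hKne : K.Nonempty)
    (hself : K = ⋃ i, F i '' K) (hconn : IsConnected K)
    {Λ : Type} (S : FRFTStructure d K Λ) (α : Λ) :
    ∀ β ∈ S.child α, ∀ β' ∈ S.child α, β ≠ β' →
      S.Kα β ∩ S.Kα β'
        = Vset S.Kα S.child S.φ S.root β ∩ Vset S.Kα S.child S.φ S.root β' := by
  intro β hβ β' hβ' hne
  apply Set.Subset.antisymm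
  · rintro x ⟨hx, hx'⟩
    exact ⟨mem_Vset S hβ hβ' hne (child_ne_root S hβ) hx hx',
      mem_Vset S hβ' hβ hne.symm (child_ne_root S hβ') hx' hx⟩
  · exact Set.inter_subset_inter (Vset_subset S β) (Vset_subset S β')
end
end

section
/- Let {K_α, Λ_α}_{α∈Λ} be an f.r.f.t. nested structure of K. Then every α ∈ Λ∖{ϑ} has exactly one parent: there is exactly one γ ∈ Λ with α ∈ Λ_γ. -/
open Set

noncomputable section

section Aux

variable {d : ℕ} {K : Set (Pt d)} {Λ : Type} (S : FRFTStructure d K Λ)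

lemma FRFTStructure.Kα_infinite (α : Λ) : (S.Kα α).Infinite := by
  have hc := S.connected α
  refine hc.isPreconnected.infinite_of_nontrivial ?_
  by_contra hnt
  rw [Set.not_nontrivial_iff] at hnt
  obtain ⟨x, hx⟩ := hc.nonempty
  exact S.not_singleton α ⟨x, hnt.eq_singleton_of_mem hx⟩

lemma FRFTStructure.Kα_mono {β γ : Λ} (h : β ∈ S.child γ) : S.Kα β ⊆ S.Kα γ := by
  rw [S.child_union γ]
  exact subset_biUnion_of_mem h

lemma FRFTStructure.key_subset_V {α δ : Λ} (hα : α ≠ S.root) {n : ℕ} (hn : 1 ≤ n)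
    (hδ : δ ∈ parentIter S.child n α) :
    S.Kα α ∩ Cset S.Kα S.child δ ⊆ Vset S.Kα S.child S.φ S.root α := by
  intro x hx
  have hsim : simRel S.Kα α α := ⟨id, ⟨1, one_pos, fun x y => (one_mul _).symm⟩, image_id _⟩
  refine mem_iUnion.2 ⟨α, mem_iUnion.2 ⟨⟨hsim, hα⟩, ?_⟩⟩
  rw [S.φ_refl, image_id]
  exact ⟨hx.1, mem_iUnion.2 ⟨n, mem_iUnion.2 ⟨hn,
    mem_iUnion₂.2 ⟨δ, hδ, hx.2⟩⟩⟩⟩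

lemma FRFTStructure.chain_exists {γ : Λ} {k : ℕ} (h : γ ∈ levels S.child S.root k) :
    ∃ f : ℕ → Λ, f 0 = S.root ∧ f k = γ ∧ ∀ t < k, f (t + 1) ∈ S.child (f t) := by
  induction k generalizing γ with
  | zero =>
    have : γ = S.root := by simpa [levels] using h
    exact ⟨fun _ => S.root, rfl, this ▸ rfl, fun t ht => absurd ht (Nat.not_lt_zero t)⟩
  | succ k ih =>
    simp only [levels, mem_iUnion] at h
    obtain ⟨β, hβ, hγβ⟩ := h
    obtain ⟨f, hf0, hfk, hstep⟩ := ih hβ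
    refine ⟨fun t => if t ≤ k then f t else γ, by simp [hf0], by
      simp [Nat.not_succ_le_self], ?_⟩
    intro t ht
    rcases Nat.lt_succ_iff_lt_or_eq.1 ht with h1 | h1
    · simp only [if_pos (Nat.succ_le_of_lt h1), if_pos (Nat.le_of_lt h1)]
      exact hstep t h1
    · subst h1
      simp only [if_neg (show ¬ t + 1 ≤ t by omega), if_pos (le_refl t), hfk]
      exact hγβ

lemma FRFTStructure.chain_mono (f : ℕ → Λ) {p : ℕ}
    (hstep : ∀ t < p, f (t + 1) ∈ S.child (f t)) :
    ∀ n i, i + n ≤ p → S.Kα (f (i + n)) ⊆ S.Kα (f i) := by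
  intro n
  induction n with
  | zero => intro i _; exact subset_rfl
  | succ n ih =>
    intro i h
    have h1 : S.Kα (f (i + n + 1)) ⊆ S.Kα (f (i + n)) :=
      S.Kα_mono (hstep (i + n) (by omega))
    exact h1.trans (ih i (by omega))

lemma FRFTStructure.chain_parentIter (f : ℕ → Λ) {p : ℕ}
    (hstep : ∀ t < p, f (t + 1) ∈ S.child (f t)) :
    ∀ n i, i + n = p → f i ∈ parentIter S.child n (f p) := by
  intro n
  induction n with
  | zero => intro i h; subst h; simp [parentIter]
  | succ n ih =>
    intro i h
    have h1 : f (i + 1) ∈ parentIter S.child n (f p) := ih (i + 1) (by omega)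
    exact mem_iUnion₂.2 ⟨f (i + 1), h1, hstep i (by omega)⟩

lemma FRFTStructure.no_self_child {α : Λ} (hα : α ≠ S.root) (h : α ∈ S.child α) :
    False := by
  obtain ⟨β0, hβ0, β1, hβ1, hne01⟩ := S.child_nontrivial α
  have hex : ∃ β ∈ S.child α, β ≠ α := by
    by_cases h1 : β0 = α
    · exact ⟨β1, hβ1, fun h2 => hne01 (h1.trans h2.symm)⟩
    · exact ⟨β0, hβ0, h1⟩
  obtain ⟨β, hβ, hβα⟩ := hex
  have hsub : S.Kα β ⊆ S.Kα α ∩ Cset S.Kα S.child α := by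
    intro x hx
    refine ⟨S.Kα_mono hβ hx, ?_⟩
    exact mem_iUnion₂.2 ⟨β, hβ, mem_iUnion₂.2 ⟨α, h,
      mem_iUnion.2 ⟨hβα, hx, S.Kα_mono hβ hx⟩⟩⟩
  have hδ : α ∈ parentIter S.child 1 α := by
    refine mem_iUnion₂.2 ⟨α, ?_, h⟩
    simp [parentIter]
  exact S.Kα_infinite β ((S.A3 α).subset (hsub.trans (S.key_subset_V hα le_rfl hδ)))

lemma FRFTStructure.no_cycle {α : Λ} (hα : α ≠ S.root) (h : ℕ → Λ) (m : ℕ)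
    (hm : h m = α) (hstep : ∀ t < m, h (t + 1) ∈ S.child (h t)) :
    ∀ r < m, h r ≠ α := by
  intro r hr hra
  have h1 : S.Kα (h m) ⊆ S.Kα (h (r + 1)) := by
    have := S.chain_mono h hstep (m - (r + 1)) (r + 1) (by omega)
    rwa [show r + 1 + (m - (r + 1)) = m from by omega] at this
  have h2 : S.Kα (h (r + 1)) ⊆ S.Kα (h r) := S.Kα_mono (hstep r hr)
  have h3 : S.Kα (h (r + 1)) = S.Kα α := by
    refine subset_antisymm ?_ ?_
    · rw [← hra]; exact h2
    · rw [← hm]; exact h1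
  have h4 : h (r + 1) = α := S.inj h3
  have h5 : α ∈ S.child α := by
    have := hstep r hr
    rwa [h4, hra] at this
  exact S.no_self_child hα h5

lemma FRFTStructure.chain_to {α γ : Λ} (hγ : α ∈ S.child γ) :
    ∃ p, 0 < p ∧ ∃ f : ℕ → Λ, f 0 = S.root ∧ f p = α ∧ f (p - 1) = γ ∧
      ∀ t < p, f (t + 1) ∈ S.child (f t) := by
  by_cases hroot : γ = S.root
  · refine ⟨1, one_pos, fun t => if t = 0 then S.root else α, by simp, by simp,
      by simp [hroot], ?_⟩
    intro t ht
    have : t = 0 := by omega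
    subst this
    simp only [if_pos rfl, if_neg one_ne_zero]
    rw [← hroot]
    exact hγ
  · obtain ⟨k, hk⟩ := S.offspring γ hroot
    obtain ⟨f, hf0, hfk, hstep⟩ := S.chain_exists hk
    refine ⟨k + 1, Nat.succ_pos k, fun t => if t ≤ k then f t else α, by simp [hf0],
      by simp, by simp [hfk], ?_⟩
    intro t ht
    rcases Nat.lt_succ_iff_lt_or_eq.1 ht with h1 | h1
    · simp only [if_pos (Nat.succ_le_of_lt h1), if_pos (Nat.le_of_lt h1)]
      exact hstep t h1
    · subst h1
      simp only [if_neg (show ¬ t + 1 ≤ t by omega), if_pos (le_refl t), hfk]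
      exact hγ

lemma FRFTStructure.parent_unique {α γ γ' : Λ} (hα : α ≠ S.root)
    (hγ : α ∈ S.child γ) (hγ' : α ∈ S.child γ') : γ = γ' := by
  classical
  by_contra hne
  obtain ⟨p, hp, f, hf0, hfp, hfγ, hfstep⟩ := S.chain_to hγ
  obtain ⟨q, hq, g, hg0, hgq, hgγ, hgstep⟩ := S.chain_to hγ'
  have hfα : ∀ r < p, f r ≠ α := S.no_cycle hα f p hfp hfstep
  have hgα : ∀ r < q, g r ≠ α := S.no_cycle hα g q hgq hgstep
  set P : ℕ → Prop := fun i => i < p ∧ ∃ j < q, f i = g j with hPdef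
  have hP0 : P 0 := ⟨hp, 0, hq, by rw [hf0, hg0]⟩
  set i := Nat.findGreatest P p with hidef
  have hPi : P i := Nat.findGreatest_spec (Nat.zero_le p) hP0
  obtain ⟨hip, j0, hj0q, hj0⟩ := hPi
  set Q : ℕ → Prop := fun j => j < q ∧ f i = g j with hQdef
  have hQj0 : Q j0 := ⟨hj0q, hj0⟩
  set j := Nat.findGreatest Q q with hjdef
  have hQj : Q j := Nat.findGreatest_spec (le_of_lt hj0q) hQj0
  obtain ⟨hjq, hfg⟩ := hQj
  have hne2 : f (i + 1) ≠ g (j + 1) := by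
    intro heq
    by_cases hx : f (i + 1) = α
    · have hi1 : i + 1 = p := by
        by_contra hlt
        exact hfα (i + 1) (by omega) hx
      have hj1 : j + 1 = q := by
        by_contra hlt
        exact hgα (j + 1) (by omega) (heq ▸ hx)
      apply hne
      have e1 : f i = γ := by rw [show i = p - 1 from by omega] at hfg ⊢; exact hfγ
      have e2 : g j = γ' := by rw [show j = q - 1 from by omega]; exact hgγ
      rw [← e1, ← e2, hfg]
    · have hi1 : i + 1 < p := by
        rcases Nat.lt_or_ge (i + 1) p with h1 | h1
        · exact h1
        · exact absurd (by rw [show i + 1 = p from by omega, hfp]) hx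
      have hj1 : j + 1 < q := by
        rcases Nat.lt_or_ge (j + 1) q with h1 | h1
        · exact h1
        · exact absurd (by rw [heq, show j + 1 = q from by omega, hgq]) hx
      exact Nat.findGreatest_is_greatest (Nat.lt_succ_self i) (by omega)
        ⟨hi1, j + 1, hj1, heq⟩
  have hc1 : f (i + 1) ∈ S.child (f i) := hfstep i hip
  have hc2 : g (j + 1) ∈ S.child (f i) := by rw [hfg]; exact hgstep j hjq
  have hsub1 : S.Kα α ⊆ S.Kα (f (i + 1)) := by
    have := S.chain_mono f hfstep (p - (i + 1)) (i + 1) (by omega)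
    rwa [show i + 1 + (p - (i + 1)) = p from by omega, hfp] at this
  have hsub2 : S.Kα α ⊆ S.Kα (g (j + 1)) := by
    have := S.chain_mono g hgstep (q - (j + 1)) (j + 1) (by omega)
    rwa [show j + 1 + (q - (j + 1)) = q from by omega, hgq] at this
  have hCsub : S.Kα α ⊆ Cset S.Kα S.child (f i) := by
    intro x hx
    exact mem_iUnion₂.2 ⟨f (i + 1), hc1, mem_iUnion₂.2 ⟨g (j + 1), hc2,
      mem_iUnion.2 ⟨hne2, hsub1 hx, hsub2 hx⟩⟩⟩
  have hpar : f i ∈ parentIter S.child (p - i) α := by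
    have := S.chain_parentIter f hfstep (p - i) i (by omega)
    rwa [hfp] at this
  have hVsub : S.Kα α ⊆ Vset S.Kα S.child S.φ S.root α := fun x hx =>
    S.key_subset_V hα (show 1 ≤ p - i from by omega) hpar ⟨hx, hCsub hx⟩
  exact S.Kα_infinite α ((S.A3 α).subset hVsub)

end Aux

/-- **Proposition 2.3(c).** For an f.r.f.t. nested structure of a connected self-similar
set `K`, every non-root index `α` has exactly one parent: there is exactly one `γ`
with `α ∈ Λ_γ`. -/
theorem stmt3 {d N : ℕ} (hN : 2 ≤ N) (F : Fin N → Pt d → Pt d) (c : Fin N → ℝ)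
    (hc : ∀ i, 0 < c i ∧ c i < 1)
    (hF : ∀ i x y, dist (F i x) (F i y) = c i * dist x y)
    (K : Set (Pt d)) (hKc : IsCompact K) (hKne : K.Nonempty)
    (hself : K = ⋃ i, F i '' K) (hconn : IsConnected K)
    {Λ : Type} (S : FRFTStructure d K Λ) :
    ∀ α : Λ, α ≠ S.root → ∃! γ : Λ, α ∈ S.child γ := by
  intro α hα
  obtain ⟨γ0, hγ0⟩ : ∃ γ, α ∈ S.child γ := by
    obtain ⟨k, hk⟩ := S.offspring α hα
    match k, hk with
    | 0, hk => exact absurd (by simpa [levels] using hk) hα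
    | k + 1, hk =>
      simp only [levels, mem_iUnion] at hk
      obtain ⟨β, _, h⟩ := hk
      exact ⟨β, h⟩
  exact ⟨γ0, hγ0, fun γ' hγ' => S.parent_unique hα hγ' hγ0⟩
end
end

section
/- Let K be a connected p.c.f. self-similar set. Then the canonical nested structure {F_w K, Λ_w}_{w∈W_*}, with Λ_w = {wi : 1 ≤ i ≤ N} and similitudes φ_{w,u} = F_u∘F_w^{-1} for all w, u ∈ W_*, is an f.r.f.t. nested structure of K with exactly one ∼-equivalence class (M = 1); in particular, the boundary V_ϑ of the root equals π(𝒫), the image of the post-critical set under the natural projection, and is finite. -/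
open Set

noncomputable section

/-- `F_w = F_{w_1} ∘ ⋯ ∘ F_{w_m}` for a word `w = w_1⋯w_m`. -/
def Fword {α : Type*} {N : ℕ} (F : Fin N → α → α) : List (Fin N) → α → α
  | [] => id
  | i :: w => F i ∘ Fword F w

/-- The word `[ω]_m = ω_1⋯ω_m` consisting of the first `m` letters of `ω ∈ Σ`. -/
def prefWord {N : ℕ} (ω : ℕ → Fin N) (m : ℕ) : List (Fin N) := (List.range m).map ω

/-- `C_K = ⋃_{i ≠ j} F_iK ∩ F_jK`, the union of the intersections of level-1 cells. -/
def CK {d N : ℕ} (F : Fin N → Pt d → Pt d) (K : Set (Pt d)) : Set (Pt d) :=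
  ⋃ i, ⋃ j, ⋃ (_ : i ≠ j), (F i '' K ∩ F j '' K)

/-- The critical set `𝒞 = π^{-1}(C_K) ⊆ Σ`: those `ω` whose projection point
(the unique point of `⋂_m F_{[ω]_m}K`) lies in `C_K`. -/
def critSet {d N : ℕ} (F : Fin N → Pt d → Pt d) (K : Set (Pt d)) :
    Set (ℕ → Fin N) :=
  {ω | ∃ x ∈ CK F K, ∀ m, x ∈ Fword F (prefWord ω m) '' K}

/-- The post-critical set `𝒫 = ⋃_{m ≥ 1} σ^m(𝒞)`. -/
def postCrit {d N : ℕ} (F : Fin N → Pt d → Pt d) (K : Set (Pt d)) :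
    Set (ℕ → Fin N) :=
  {ω | ∃ m : ℕ, 1 ≤ m ∧ ∃ τ ∈ critSet F K, ω = fun k => τ (k + m)}

/-- The image `π(A)` of a subset `A ⊆ Σ` under the natural projection `π`. -/
def piImage {d N : ℕ} (F : Fin N → Pt d → Pt d) (K : Set (Pt d))
    (A : Set (ℕ → Fin N)) : Set (Pt d) :=
  {x | ∃ ω ∈ A, ∀ m, x ∈ Fword F (prefWord ω m) '' K}

/-! ### Auxiliary lemmas -/

section Aux

variable {d N : ℕ}

theorem aux_isom_zero_surj {d : ℕ} (g : Pt d → Pt d)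
    (hg : ∀ x y, dist (g x) (g y) = dist x y) (h0 : g 0 = 0) : Function.Surjective g := by
  rcases Nat.eq_zero_or_pos d with hd | hd
  · subst hd
    intro y
    exact ⟨0, Subsingleton.elim _ _⟩
  haveI : Nonempty (Fin d) := ⟨⟨0, hd⟩⟩
  have hnorm : ∀ x, ‖g x‖ = ‖x‖ := by
    intro x
    have := hg x 0
    rwa [h0, dist_zero_right, dist_zero_right] at this
  have hinner : ∀ x y, inner ℝ (g x) (g y) = (inner ℝ x y : ℝ) := by
    intro x y
    rw [real_inner_eq_norm_mul_self_add_norm_mul_self_sub_norm_sub_mul_self_div_two (g x) (g y),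
      real_inner_eq_norm_mul_self_add_norm_mul_self_sub_norm_sub_mul_self_div_two x y,
      hnorm, hnorm, ← dist_eq_norm, ← dist_eq_norm, hg]
  set b : OrthonormalBasis (Fin d) ℝ (Pt d) := EuclideanSpace.basisFun (Fin d) ℝ with hb
  have hbo := b.orthonormal
  rw [orthonormal_iff_ite] at hbo
  have hortho : Orthonormal ℝ (fun i => g (b i)) := by
    rw [orthonormal_iff_ite]
    intro i j
    rw [hinner]
    exact hbo i j
  have hcard : Fintype.card (Fin d) = Module.finrank ℝ (Pt d) := by
    simp [finrank_euclideanSpace_fin]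
  have hspan : Submodule.span ℝ (Set.range fun i => g (b i)) = ⊤ := by
    rw [← coe_basisOfLinearIndependentOfCardEqFinrank hortho.linearIndependent hcard]
    exact (basisOfLinearIndependentOfCardEqFinrank hortho.linearIndependent hcard).span_eq
  intro y
  refine ⟨∑ i, (inner ℝ y (g (b i)) : ℝ) • b i, ?_⟩
  set x := ∑ i, (inner ℝ y (g (b i)) : ℝ) • b i with hx
  have key : ∀ i, (inner ℝ (g (b i)) (g x - y) : ℝ) = 0 := by
    intro i
    rw [inner_sub_right, hinner, hx, inner_sum]
    simp only [real_inner_smul_right, hbo]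
    simp [Finset.sum_ite_eq, real_inner_comm, mul_comm]
  have hz : g x - y = 0 := by
    have hmem : g x - y ∈ (Submodule.span ℝ (Set.range fun i => g (b i)))ᗮ := by
      rw [Submodule.mem_orthogonal]
      intro u hu
      induction hu using Submodule.span_induction with
      | mem z hz => obtain ⟨i, rfl⟩ := hz; exact key i
      | zero => simp
      | add u v _ _ h1 h2 => rw [inner_add_left, h1, h2, add_zero]
      | smul a u _ h1 => rw [inner_smul_left, h1, mul_zero]
    rw [hspan, Submodule.top_orthogonal_eq_bot, Submodule.mem_bot] at hmem
    exact hmem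
  exact sub_eq_zero.mp hz

theorem IsSimilitude.surjective {f : Pt d → Pt d} (hf : IsSimilitude f) :
    Function.Surjective f := by
  obtain ⟨r, hr, hd⟩ := hf
  set g : Pt d → Pt d := fun x => r⁻¹ • (f x - f 0) with hg
  have hgi : ∀ x y, dist (g x) (g y) = dist x y := by
    intro x y
    rw [hg]
    simp only [dist_eq_norm, ← smul_sub]
    rw [norm_smul, sub_sub_sub_cancel_right, ← dist_eq_norm, hd, dist_eq_norm,
      norm_inv, Real.norm_of_nonneg hr.le, inv_mul_cancel_left₀ hr.ne']
  have hg0 : g 0 = 0 := by simp [hg]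
  intro y
  obtain ⟨x, hx⟩ := aux_isom_zero_surj g hgi hg0 (r⁻¹ • (y - f 0))
  rw [hg] at hx
  simp only at hx
  exact ⟨x, sub_left_inj.mp (smul_right_injective (Pt d) (inv_ne_zero hr.ne') hx)⟩

theorem IsSimilitude.injective {f : Pt d → Pt d} (hf : IsSimilitude f) :
    Function.Injective f := by
  obtain ⟨r, hr, hd⟩ := hf
  intro x y hxy
  have : dist (f x) (f y) = 0 := by rw [hxy, dist_self]
  rw [hd] at this
  have := (mul_eq_zero.mp this).resolve_left (ne_of_gt hr)
  exact dist_eq_zero.mp this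

theorem IsSimilitude.continuous {f : Pt d → Pt d} (hf : IsSimilitude f) :
    Continuous f := by
  obtain ⟨r, hr, hd⟩ := hf
  refine (lipschitzWith_iff_dist_le_mul.mpr fun x y => ?_).continuous (K := r.toNNReal)
  rw [hd, Real.coe_toNNReal r hr.le]

theorem IsSimilitude.comp {f g : Pt d → Pt d} (hf : IsSimilitude f) (hg : IsSimilitude g) :
    IsSimilitude (f ∘ g) := by
  obtain ⟨r, hr, hd⟩ := hf
  obtain ⟨s, hs, he⟩ := hg
  exact ⟨r * s, mul_pos hr hs, fun x y => by simp [Function.comp, hd, he, mul_assoc]⟩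

theorem aux_id_sim : IsSimilitude (id : Pt d → Pt d) := ⟨1, one_pos, by simp⟩

end Aux
section Aux2

variable {d N : ℕ}

theorem Fword_nil (F : Fin N → Pt d → Pt d) : Fword F [] = id := rfl

theorem Fword_append (F : Fin N → Pt d → Pt d) (a b : List (Fin N)) :
    Fword F (a ++ b) = Fword F a ∘ Fword F b := by
  induction a with
  | nil => rfl
  | cons i a ih => simp [Fword, ih, Function.comp_assoc]

theorem Fword_dist {F : Fin N → Pt d → Pt d} {c : Fin N → ℝ}
    (hF : ∀ i x y, dist (F i x) (F i y) = c i * dist x y) (w : List (Fin N)) :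
    ∀ x y, dist (Fword F w x) (Fword F w y) = (w.map c).prod * dist x y := by
  induction w with
  | nil => simp [Fword]
  | cons i w ih =>
    intro x y
    simp only [Fword, Function.comp_apply, hF, ih, List.map_cons, List.prod_cons, mul_assoc]

theorem rword_pos {c : Fin N → ℝ} (hc : ∀ i, 0 < c i ∧ c i < 1) (w : List (Fin N)) :
    0 < (w.map c).prod := by
  apply List.prod_pos
  intro x hx
  obtain ⟨i, _, rfl⟩ := List.mem_map.mp hx
  exact (hc i).1

theorem Fword_isSim {F : Fin N → Pt d → Pt d} {c : Fin N → ℝ}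
    (hc : ∀ i, 0 < c i ∧ c i < 1)
    (hF : ∀ i x y, dist (F i x) (F i y) = c i * dist x y) (w : List (Fin N)) :
    IsSimilitude (Fword F w) :=
  ⟨(w.map c).prod, rword_pos hc w, Fword_dist hF w⟩

theorem prefWord_length {N : ℕ} (ω : ℕ → Fin N) (m : ℕ) : (prefWord ω m).length = m := by
  simp [prefWord]

theorem prefWord_zero {N : ℕ} (ω : ℕ → Fin N) : prefWord ω 0 = [] := by simp [prefWord]

theorem prefWord_succ {N : ℕ} (ω : ℕ → Fin N) (m : ℕ) :
    prefWord ω (m + 1) = prefWord ω m ++ [ω m] := by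
  simp [prefWord, List.range_succ]

theorem prefWord_add {N : ℕ} (ω : ℕ → Fin N) (m k : ℕ) :
    prefWord ω (m + k) = prefWord ω m ++ prefWord (fun i => ω (i + m)) k := by
  induction k with
  | zero => simp [prefWord]
  | succ k ih =>
    rw [← Nat.add_assoc, prefWord_succ, ih, prefWord_succ, List.append_assoc]
    simp [Nat.add_comm]

/-- `glue w ω`: the sequence starting with the word `w`, followed by `ω`. -/
def glue {N : ℕ} (w : List (Fin N)) (ω : ℕ → Fin N) : ℕ → Fin N :=
  fun k => if h : k < w.length then w.get ⟨k, h⟩ else ω (k - w.length)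

theorem glue_pref {N : ℕ} (w : List (Fin N)) (ω : ℕ → Fin N) :
    prefWord (glue w ω) w.length = w := by
  apply List.ext_getElem
  · simp [prefWord]
  · intro i h1 h2
    simp only [prefWord, List.getElem_map, List.getElem_range]
    rw [prefWord_length] at h1
    simp [glue, h1]

theorem glue_shift {N : ℕ} (w : List (Fin N)) (ω : ℕ → Fin N) :
    (fun k => glue w ω (k + w.length)) = ω := by
  funext k
  simp [glue]

end Aux2
section Aux3

variable {d N : ℕ} {F : Fin N → Pt d → Pt d} {c : Fin N → ℝ} {K : Set (Pt d)}

theorem F_image_subset (hself : K = ⋃ i, F i '' K) (i : Fin N) : F i '' K ⊆ K := by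
  conv_rhs => rw [hself]
  exact subset_iUnion (fun i => F i '' K) i

theorem Fword_image_subset (hself : K = ⋃ i, F i '' K) (w : List (Fin N)) :
    Fword F w '' K ⊆ K := by
  induction w with
  | nil => simp [Fword_nil]
  | cons i w ih =>
    rw [show Fword F (i :: w) = F i ∘ Fword F w from rfl, Set.image_comp]
    exact (Set.image_mono (f := F i) ih).trans (F_image_subset hself i)

theorem pref_mono (hself : K = ⋃ i, F i '' K) (ω : ℕ → Fin N) {k m : ℕ} (hkm : k ≤ m) :
    Fword F (prefWord ω m) '' K ⊆ Fword F (prefWord ω k) '' K := by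
  obtain ⟨j, rfl⟩ := Nat.exists_eq_add_of_le hkm
  rw [prefWord_add, Fword_append, Set.image_comp]
  exact Set.image_mono (Fword_image_subset hself _)

theorem pi_exists (hc : ∀ i, 0 < c i ∧ c i < 1)
    (hF : ∀ i x y, dist (F i x) (F i y) = c i * dist x y)
    (hKc : IsCompact K) (hKne : K.Nonempty) (hself : K = ⋃ i, F i '' K) (ω : ℕ → Fin N) :
    ∃ x, ∀ m, x ∈ Fword F (prefWord ω m) '' K := by
  have hcomp : ∀ m, IsCompact (Fword F (prefWord ω m) '' K) :=
    fun m => hKc.image (Fword_isSim hc hF _).continuous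
  obtain ⟨x, hx⟩ := IsCompact.nonempty_iInter_of_sequence_nonempty_isCompact_isClosed
    (fun m => Fword F (prefWord ω m) '' K)
    (fun m => pref_mono hself ω (Nat.le_succ m))
    (fun m => hKne.image _) (hcomp 0) (fun m => (hcomp m).isClosed)
  exact ⟨x, fun m => Set.mem_iInter.mp hx m⟩

theorem pi_unique (hN : 2 ≤ N) (hc : ∀ i, 0 < c i ∧ c i < 1)
    (hF : ∀ i x y, dist (F i x) (F i y) = c i * dist x y)
    (hKc : IsCompact K) {ω : ℕ → Fin N} {x y : Pt d}
    (hx : ∀ m, x ∈ Fword F (prefWord ω m) '' K)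
    (hy : ∀ m, y ∈ Fword F (prefWord ω m) '' K) : x = y := by
  haveI : Nonempty (Fin N) := ⟨⟨0, by omega⟩⟩
  set q : ℝ := Finset.univ.sup' Finset.univ_nonempty c with hq
  have hq1 : q < 1 := by
    rw [hq, Finset.sup'_lt_iff]
    exact fun i _ => (hc i).2
  have hq0 : 0 ≤ q := le_trans (hc (Classical.arbitrary _)).1.le
    (Finset.le_sup' c (Finset.mem_univ _))
  have hprod : ∀ m, ((prefWord ω m).map c).prod ≤ q ^ m := by
    intro m
    induction m with
    | zero => simp [prefWord_zero]
    | succ m ih =>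
      rw [prefWord_succ, List.map_append, List.prod_append, pow_succ]
      simp only [List.map_cons, List.map_nil, List.prod_cons, List.prod_nil, mul_one]
      exact mul_le_mul ih (Finset.le_sup' c (Finset.mem_univ _)) (hc _).1.le (pow_nonneg hq0 m)
  have hdist : ∀ m : ℕ, dist x y ≤ q ^ m * Metric.diam K := by
    intro m
    obtain ⟨a, ha, hax⟩ := hx m
    obtain ⟨b, hb, hby⟩ := hy m
    rw [← hax, ← hby, Fword_dist hF]
    exact mul_le_mul (hprod m) (Metric.dist_le_diam_of_mem hKc.isBounded ha hb)
      dist_nonneg (pow_nonneg hq0 m)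
  have htend : Filter.Tendsto (fun m : ℕ => q ^ m * Metric.diam K) Filter.atTop (nhds 0) := by
    have := (tendsto_pow_atTop_nhds_zero_of_lt_one hq0 hq1).mul_const (Metric.diam K)
    simpa using this
  have : dist x y ≤ 0 := ge_of_tendsto' htend hdist
  exact dist_le_zero.mp this

theorem sigma_infinite (hN : 2 ≤ N) : Infinite (ℕ → Fin N) := by
  refine Infinite.of_injective (fun n : ℕ => (fun k => if k = n then (⟨1, by omega⟩ : Fin N)
    else ⟨0, by omega⟩)) ?_
  intro a b h
  by_contra hab
  have := congrFun h a
  simp only [if_pos rfl, if_neg hab] at this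
  exact absurd (congrArg Fin.val this) (by simp)

theorem no_big_overlap (hN : 2 ≤ N) (hc : ∀ i, 0 < c i ∧ c i < 1)
    (hF : ∀ i x y, dist (F i x) (F i y) = c i * dist x y)
    (hKc : IsCompact K) (hKne : K.Nonempty) (hself : K = ⋃ i, F i '' K)
    (hpcf : (postCrit F K).Finite) {w : List (Fin N)} (hw : w ≠ [])
    (hsub : Fword F w '' K ⊆ CK F K) : False := by
  haveI := sigma_infinite hN
  have huniv : postCrit F K = Set.univ := by
    apply Set.eq_univ_of_forall
    intro ω
    refine ⟨w.length, by
      rcases w with _ | _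
      · exact absurd rfl hw
      · simp, glue w ω, ?_, (glue_shift w ω).symm⟩
    obtain ⟨x, hxall⟩ := pi_exists hc hF hKc hKne hself (glue w ω)
    refine ⟨x, ?_, hxall⟩
    have := hxall w.length
    rw [glue_pref] at this
    exact hsub this
  rw [huniv] at hpcf
  exact Set.infinite_univ hpcf

end Aux3
section Aux4

variable {d N : ℕ} {F : Fin N → Pt d → Pt d} {c : Fin N → ℝ} {K : Set (Pt d)}

/-- The common hypothesis bundle for a connected p.c.f. self-similar set. -/
structure SSS (F : Fin N → Pt d → Pt d) (c : Fin N → ℝ) (K : Set (Pt d)) : Prop where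
  hN : 2 ≤ N
  hc : ∀ i, 0 < c i ∧ c i < 1
  hF : ∀ i x y, dist (F i x) (F i y) = c i * dist x y
  hFinj : ∀ i, Function.Injective (F i)
  hKc : IsCompact K
  hKne : K.Nonempty
  hself : K = ⋃ i, F i '' K
  hpcf : (postCrit F K).Finite

namespace SSS

variable (H : SSS F c K)
include H

theorem word_sim (w : List (Fin N)) : IsSimilitude (Fword F w) := Fword_isSim H.hc H.hF w

theorem word_inj (w : List (Fin N)) : Function.Injective (Fword F w) :=
  (H.word_sim w).injective

theorem word_surj (w : List (Fin N)) : Function.Surjective (Fword F w) :=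
  (H.word_sim w).surjective

theorem no_overlap {w : List (Fin N)} (hw : w ≠ []) (hsub : Fword F w '' K ⊆ CK F K) :
    False :=
  no_big_overlap H.hN H.hc H.hF H.hKc H.hKne H.hself H.hpcf hw hsub

omit H in
theorem mem_CK {i j : Fin N} (hij : i ≠ j) {x : Pt d} (hi : x ∈ F i '' K)
    (hj : x ∈ F j '' K) : x ∈ CK F K := by
  simp only [CK, Set.mem_iUnion]
  exact ⟨i, j, hij, hi, hj⟩

theorem K_two_points : ∃ a ∈ K, ∃ b ∈ K, a ≠ b := by
  have hN2 := H.hN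
  by_contra hcon
  push_neg at hcon
  obtain ⟨x, hx⟩ := H.hKne
  have hKx : K = {x} := Set.eq_singleton_iff_unique_mem.mpr ⟨hx, fun y hy => hcon y hy x hx⟩
  have hFi : ∀ i : Fin N, F i '' K = {x} := by
    intro i
    refine (Set.Nonempty.subset_singleton_iff (H.hKne.image _)).mp ?_
    exact hKx ▸ F_image_subset H.hself i
  have hij : (⟨0, by omega⟩ : Fin N) ≠ ⟨1, by omega⟩ := by
    intro h
    simpa using congrArg Fin.val h
  apply H.no_overlap (w := [⟨0, by omega⟩]) (by simp)
  intro y hy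
  have h0 : Fword F [(⟨0, by omega⟩ : Fin N)] '' K = F ⟨0, by omega⟩ '' K := by
    rw [show Fword F [(⟨0, by omega⟩ : Fin N)] = F ⟨0, by omega⟩ ∘ id from rfl]
    simp [Set.image_comp]
  rw [h0] at hy
  exact mem_CK hij hy (by rw [hFi]; rw [hFi] at hy; exact hy)

theorem F_idx_inj {i j : Fin N} (hij : F i = F j) : i = j := by
  by_contra hne
  apply H.no_overlap (w := [i]) (by simp)
  intro y hy
  have h0 : Fword F [i] '' K = F i '' K := by
    rw [show Fword F [i] = F i ∘ id from rfl]; simp [Set.image_comp]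
  rw [h0] at hy
  exact mem_CK hne hy (hij ▸ hy)

theorem cell_inj : Function.Injective (fun w : List (Fin N) => Fword F w '' K) := by
  have hN2 := H.hN
  have key : ∀ w u : List (Fin N), Fword F w '' K = Fword F u '' K → w = u := by
    intro w
    induction w with
    | nil =>
      intro u hu
      rcases u with _ | ⟨j, u⟩
      · rfl
      · exfalso
        -- K = F_{j::u} K ⊆ F_j K
        have hKj : K ⊆ F j '' K := by
          have h1 : Fword F ([] : List (Fin N)) '' K = K := by simp [Fword_nil]
          rw [h1] at hu
          calc K = F j '' (Fword F u '' K) := by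
                rw [← Set.image_comp]; exact hu
            _ ⊆ F j '' K := Set.image_mono (Fword_image_subset H.hself u)
        -- pick i ≠ j
        have : ∃ i : Fin N, i ≠ j := by
          rcases eq_or_ne j ⟨0, by omega⟩ with h | h
          · exact ⟨⟨1, by omega⟩, by rw [h]; intro hh; simpa using congrArg Fin.val hh⟩
          · exact ⟨⟨0, by omega⟩, fun hh => h hh.symm⟩
        obtain ⟨i, hij⟩ := this
        apply H.no_overlap (w := [i]) (by simp)
        intro y hy
        have h0 : Fword F [i] '' K = F i '' K := by
          rw [show Fword F [i] = F i ∘ id from rfl]; simp [Set.image_comp]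
        rw [h0] at hy
        have hyK : y ∈ K := F_image_subset H.hself i hy
        exact mem_CK hij hy (hKj hyK)
    | cons i w ih =>
      intro u hu
      rcases u with _ | ⟨j, u⟩
      · exfalso
        -- symmetric case: F_{i::w} K = K
        have hKi : K ⊆ F i '' K := by
          have h1 : Fword F ([] : List (Fin N)) '' K = K := by simp [Fword_nil]
          rw [h1] at hu
          calc K = F i '' (Fword F w '' K) := by
                rw [← Set.image_comp]; exact hu.symm
            _ ⊆ F i '' K := Set.image_mono (Fword_image_subset H.hself w)
        have : ∃ i' : Fin N, i' ≠ i := by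
          rcases eq_or_ne i ⟨0, by omega⟩ with h | h
          · exact ⟨⟨1, by omega⟩, by rw [h]; intro hh; simpa using congrArg Fin.val hh⟩
          · exact ⟨⟨0, by omega⟩, fun hh => h hh.symm⟩
        obtain ⟨i', hij⟩ := this
        apply H.no_overlap (w := [i']) (by simp)
        intro y hy
        have h0 : Fword F [i'] '' K = F i' '' K := by
          rw [show Fword F [i'] = F i' ∘ id from rfl]; simp [Set.image_comp]
        rw [h0] at hy
        have hyK : y ∈ K := F_image_subset H.hself i' hy
        exact mem_CK hij hy (hKi hyK)
      · rcases eq_or_ne i j with rfl | hij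
        · -- same head, cancel
          have h1 : F i '' (Fword F w '' K) = F i '' (Fword F u '' K) := by
            rw [← Set.image_comp, ← Set.image_comp]
            exact hu
          have h2 := (Set.image_injective.mpr (H.hFinj i)) h1
          rw [ih u h2]
        · exfalso
          apply H.no_overlap (w := i :: w) (by simp)
          intro y hy
          have hyi : y ∈ F i '' K := by
            rw [show Fword F (i :: w) = F i ∘ Fword F w from rfl, Set.image_comp] at hy
            exact Set.image_mono (Fword_image_subset H.hself w) hy
          have hyj : y ∈ F j '' K := by
            rw [hu, show Fword F (j :: u) = F j ∘ Fword F u from rfl, Set.image_comp] at hy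
            exact Set.image_mono (Fword_image_subset H.hself u) hy
          exact mem_CK hij hyi hyj
  exact fun w u h => key w u h

theorem address_exists {x : Pt d} (hx : x ∈ K) :
    ∃ ω : ℕ → Fin N, ∀ m, x ∈ Fword F (prefWord ω m) '' K := by
  have hstep : ∀ y : {y : Pt d // y ∈ K}, ∃ p : Fin N × {z : Pt d // z ∈ K},
      F p.1 p.2.1 = y.1 := by
    rintro ⟨y, hy⟩
    rw [H.hself] at hy
    obtain ⟨i, hi⟩ := Set.mem_iUnion.mp hy
    obtain ⟨z, hz, hzy⟩ := hi
    exact ⟨⟨i, ⟨z, hz⟩⟩, hzy⟩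
  let seq : ℕ → {y : Pt d // y ∈ K} := fun m =>
    Nat.rec ⟨x, hx⟩ (fun _ prev => (hstep prev).choose.2) m
  let ω : ℕ → Fin N := fun m => (hstep (seq m)).choose.1
  have hrec : ∀ m, F (ω m) (seq (m + 1)).1 = (seq m).1 := fun m => (hstep (seq m)).choose_spec
  refine ⟨ω, ?_⟩
  have key : ∀ m, Fword F (prefWord ω m) (seq m).1 = x := by
    intro m
    induction m with
    | zero => simp [prefWord_zero, Fword_nil, seq]
    | succ m ihm =>
      rw [prefWord_succ, Fword_append]
      show Fword F (prefWord ω m) (Fword F [ω m] (seq (m+1)).1) = x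
      rw [show Fword F [ω m] = F (ω m) ∘ id from rfl]
      simp only [Function.comp_apply, id_eq]
      rw [hrec m, ihm]
  exact fun m => ⟨(seq m).1, (seq m).2, key m⟩

end SSS

end Aux4
section Aux5

variable {d N : ℕ} {F : Fin N → Pt d → Pt d} {c : Fin N → ℝ} {K : Set (Pt d)}

theorem Fword_single (F : Fin N → Pt d → Pt d) (i : Fin N) : Fword F [i] = F i := rfl

theorem Fword_cons_eq (F : Fin N → Pt d → Pt d) (i : Fin N) (w : List (Fin N)) :
    Fword F (i :: w) = F i ∘ Fword F w := rfl

/-- `γ ∈ Pⁿ(β)` iff `β = γ ++ s` for a word `s` of length `n`. -/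
theorem parentIter_canon (n : ℕ) (β γ : List (Fin N)) :
    γ ∈ parentIter (fun w => {u : List (Fin N) | ∃ i : Fin N, u = w ++ [i]}) n β ↔
      ∃ s : List (Fin N), s.length = n ∧ β = γ ++ s := by
  induction n generalizing γ with
  | zero =>
    simp only [parentIter, Set.mem_singleton_iff, List.length_eq_zero_iff]
    constructor
    · rintro rfl; exact ⟨[], rfl, by simp⟩
    · rintro ⟨s, rfl, rfl⟩; simp
  | succ n ih =>
    simp only [parentIter, Set.mem_iUnion, exists_prop]
    constructor
    · rintro ⟨β'', hβ'', hγ⟩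
      obtain ⟨s, hslen, rfl⟩ := (ih β'').mp hβ''
      obtain ⟨i, rfl⟩ : ∃ i, β'' = γ ++ [i] := hγ
      exact ⟨i :: s, by simp [hslen], by simp⟩
    · rintro ⟨s, hslen, rfl⟩
      rcases s with _ | ⟨i, s⟩
      · simp at hslen
      · refine ⟨γ ++ [i], (ih (γ ++ [i])).mpr ⟨s, by simpa using hslen, by simp⟩, ⟨i, rfl⟩⟩

theorem levels_canon (k : ℕ) (w : List (Fin N)) :
    w ∈ levels (fun w => {u : List (Fin N) | ∃ i : Fin N, u = w ++ [i]})
      ([] : List (Fin N)) k ↔ w.length = k := by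
  induction k generalizing w with
  | zero => simp [levels, List.length_eq_zero_iff, eq_comm]
  | succ k ih =>
    simp only [levels, Set.mem_iUnion, exists_prop]
    constructor
    · rintro ⟨β, hβ, i, rfl⟩
      simp [ih β |>.mp hβ]
    · intro hw
      have hne : w ≠ [] := by
        intro h; rw [h] at hw; simp at hw
      refine ⟨w.dropLast, (ih _).mpr ?_, w.getLast hne, ?_⟩
      · simp [List.length_dropLast, hw]
      · rw [List.dropLast_append_getLast hne]

namespace SSS

variable (H : SSS F c K)
include H

theorem linv (w : List (Fin N)) :
    Function.LeftInverse (Function.invFun (Fword F w)) (Fword F w) :=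
  Function.leftInverse_invFun (H.word_inj w)

theorem rinv (w : List (Fin N)) :
    Function.RightInverse (Function.invFun (Fword F w)) (Fword F w) :=
  Function.rightInverse_invFun (H.word_surj w)

theorem invFun_sim (w : List (Fin N)) : IsSimilitude (Function.invFun (Fword F w)) := by
  refine ⟨((w.map c).prod)⁻¹, inv_pos.mpr (rword_pos H.hc w), fun x y => ?_⟩
  have h1 : dist (Fword F w (Function.invFun (Fword F w) x))
      (Fword F w (Function.invFun (Fword F w) y)) = (w.map c).prod *
      dist (Function.invFun (Fword F w) x) (Function.invFun (Fword F w) y) :=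
    Fword_dist H.hF w _ _
  rw [H.rinv w x, H.rinv w y] at h1
  rw [h1, inv_mul_cancel_left₀ (rword_pos H.hc w).ne']

theorem phi_sim (w u : List (Fin N)) :
    IsSimilitude (Fword F u ∘ Function.invFun (Fword F w)) :=
  (H.word_sim u).comp (H.invFun_sim w)

theorem invFun_image (w : List (Fin N)) (S : Set (Pt d)) :
    Function.invFun (Fword F w) '' (Fword F w '' S) = S := by
  rw [← Set.image_comp]
  have : ∀ a ∈ S, (Function.invFun (Fword F w) ∘ Fword F w) a = id a := fun a _ => H.linv w a
  rw [Set.image_congr this, Set.image_id]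

theorem phi_maps (w u : List (Fin N)) :
    (Fword F u ∘ Function.invFun (Fword F w)) '' (Fword F w '' K) = Fword F u '' K := by
  rw [Set.image_comp, H.invFun_image w K]

theorem simRel_total (w u : List (Fin N)) : simRel (fun w => Fword F w '' K) w u :=
  ⟨Fword F u ∘ Function.invFun (Fword F w), H.phi_sim w u, H.phi_maps w u⟩

theorem phi_refl (w : List (Fin N)) : Fword F w ∘ Function.invFun (Fword F w) = id :=
  funext fun x => H.rinv w x

theorem phi_comp (a g b : List (Fin N)) :
    (Fword F b ∘ Function.invFun (Fword F g)) ∘ (Fword F g ∘ Function.invFun (Fword F a)) =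
      Fword F b ∘ Function.invFun (Fword F a) := by
  funext x
  simp only [Function.comp_apply]
  rw [H.linv g]

theorem phi_append (α α' : List (Fin N)) (i : Fin N) :
    Fword F (α' ++ [i]) ∘ Function.invFun (Fword F (α ++ [i])) =
      Fword F α' ∘ Function.invFun (Fword F α) := by
  funext x
  simp only [Function.comp_apply]
  set z := Function.invFun (Fword F (α ++ [i])) x with hzdef
  have hz : Fword F (α ++ [i]) z = x := H.rinv _ x
  rw [Fword_append] at hz
  have h2 : Function.invFun (Fword F α) x = Fword F [i] z := by
    rw [← hz]; exact H.linv α _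
  rw [h2, Fword_append]
  rfl

theorem phi_cancel {α α' : List (Fin N)} {i j : Fin N}
    (h : Fword F (α' ++ [j]) ∘ Function.invFun (Fword F (α ++ [i])) =
      Fword F α' ∘ Function.invFun (Fword F α)) : j = i := by
  have h2 := h.trans (H.phi_append α α' i).symm
  have h3 : ∀ p : Pt d, Fword F (α' ++ [j]) p = Fword F (α' ++ [i]) p := by
    intro p
    have := congrFun h2 (Fword F (α ++ [i]) p)
    rwa [Function.comp_apply, Function.comp_apply, H.linv _ p] at this
  have h4 : ∀ p, F j p = F i p := by
    intro p
    have := h3 p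
    rw [Fword_append, Fword_append] at this
    exact H.word_inj α' this
  exact H.F_idx_inj (funext h4)

theorem Cset_canon (γ : List (Fin N)) :
    Cset (fun w => Fword F w '' K) (fun w => {u : List (Fin N) | ∃ i : Fin N, u = w ++ [i]})
      γ = Fword F γ '' CK F K := by
  ext x
  simp only [Cset, Set.mem_iUnion, exists_prop, Set.mem_setOf_eq]
  constructor
  · rintro ⟨β, ⟨i, rfl⟩, β', ⟨j, rfl⟩, hne, hx1, hx2⟩
    have hij : i ≠ j := fun h => hne (by rw [h])
    rw [Fword_append, Set.image_comp, Fword_single] at hx1 hx2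
    obtain ⟨y, hy, rfl⟩ := hx1
    obtain ⟨y', hy', hyy⟩ := hx2
    have heq : y' = y := H.word_inj γ hyy
    rw [heq] at hy'
    exact ⟨y, mem_CK hij hy hy', rfl⟩
  · rintro ⟨y, hy, rfl⟩
    simp only [CK, Set.mem_iUnion, exists_prop] at hy
    obtain ⟨i, j, hij, hyi, hyj⟩ := hy
    refine ⟨γ ++ [i], ⟨i, rfl⟩, γ ++ [j], ⟨j, rfl⟩, ?_, ?_, ?_⟩
    · intro h
      exact hij (by simpa using List.append_cancel_left h)
    · rw [Fword_append, Set.image_comp, Fword_single]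
      exact Set.mem_image_of_mem _ hyi
    · rw [Fword_append, Set.image_comp, Fword_single]
      exact Set.mem_image_of_mem _ hyj

end SSS

end Aux5
section Aux6

variable {d N : ℕ} {F : Fin N → Pt d → Pt d} {c : Fin N → ℝ} {K : Set (Pt d)}

namespace SSS

variable (H : SSS F c K)
include H

theorem Vroot_char :
    Vset (fun w : List (Fin N) => Fword F w '' K)
      (fun w => {u : List (Fin N) | ∃ i : Fin N, u = w ++ [i]})
      (fun w u => Fword F u ∘ Function.invFun (Fword F w)) ([] : List (Fin N)) [] =
      {x | x ∈ K ∧ ∃ s : List (Fin N), s ≠ [] ∧ Fword F s x ∈ CK F K} := by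
  ext x
  simp only [Vset, Set.mem_iUnion, exists_prop, Set.mem_setOf_eq]
  constructor
  · rintro ⟨β, ⟨_, hβ⟩, hx⟩
    obtain ⟨y, ⟨hyK, hyC⟩, hxy⟩ := hx
    simp only [Set.mem_iUnion, exists_prop] at hyC
    obtain ⟨n, hn1, γ, hγ, hyCγ⟩ := hyC
    rw [parentIter_canon] at hγ
    obtain ⟨s, hslen, rfl⟩ := hγ
    rw [Cset_canon H] at hyCγ
    obtain ⟨z, hz, rfl⟩ := hyCγ
    obtain ⟨a, haK, ha⟩ := hyK
    have hs0 : s ≠ [] := by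
      intro h; rw [h] at hslen; simp at hslen; omega
    have hxa : x = a := by
      rw [← hxy, ← ha]
      simp only [Function.comp_apply]
      rw [H.linv]
      rfl
    have h5 : Fword F γ (Fword F s a) = Fword F γ z := by
      calc Fword F γ (Fword F s a) = Fword F (γ ++ s) a := by rw [Fword_append]; rfl
        _ = Fword F γ z := ha
    have h6 : Fword F s a = z := H.word_inj γ h5
    refine ⟨by rw [hxa]; exact haK, s, hs0, ?_⟩
    rw [hxa, h6]
    exact hz
  · rintro ⟨hxK, s, hs, hsC⟩
    refine ⟨s, ⟨H.simRel_total s [], hs⟩, ?_⟩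
    refine ⟨Fword F s x, ⟨Set.mem_image_of_mem _ hxK, ?_⟩, ?_⟩
    · simp only [Set.mem_iUnion, exists_prop]
      refine ⟨s.length, List.length_pos_iff.mpr hs, [], ?_, ?_⟩
      · rw [parentIter_canon]; exact ⟨s, rfl, by simp⟩
      · rw [Cset_canon H]
        exact ⟨Fword F s x, hsC, rfl⟩
    · simp only [Function.comp_apply]
      rw [H.linv]
      rfl

theorem Vset_eq_image (α : List (Fin N)) :
    Vset (fun w : List (Fin N) => Fword F w '' K)
      (fun w => {u : List (Fin N) | ∃ i : Fin N, u = w ++ [i]})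
      (fun w u => Fword F u ∘ Function.invFun (Fword F w)) ([] : List (Fin N)) α =
      Fword F α '' (Vset (fun w : List (Fin N) => Fword F w '' K)
        (fun w => {u : List (Fin N) | ∃ i : Fin N, u = w ++ [i]})
        (fun w u => Fword F u ∘ Function.invFun (Fword F w)) ([] : List (Fin N)) []) := by
  ext x
  simp only [Vset, Set.mem_iUnion, Set.mem_image, exists_prop]
  constructor
  · rintro ⟨β, ⟨_, hβ⟩, y, hy, rfl⟩
    exact ⟨Function.invFun (Fword F β) y, ⟨β, ⟨H.simRel_total _ _, hβ⟩, y, hy, rfl⟩, rfl⟩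
  · rintro ⟨v, ⟨β, ⟨_, hβ⟩, y, hy, rfl⟩, rfl⟩
    exact ⟨β, ⟨H.simRel_total _ _, hβ⟩, y, hy, rfl⟩

theorem Vroot_piImage :
    {x | x ∈ K ∧ ∃ s : List (Fin N), s ≠ [] ∧ Fword F s x ∈ CK F K} =
      piImage F K (postCrit F K) := by
  ext x
  simp only [Set.mem_setOf_eq, piImage, postCrit, critSet]
  constructor
  · rintro ⟨hxK, s, hs, hsC⟩
    obtain ⟨ω, hω⟩ := H.address_exists hxK
    have hm1 : 1 ≤ s.length := List.length_pos_iff.mpr hs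
    have hτcrit : ∃ x' ∈ CK F K, ∀ m, x' ∈ Fword F (prefWord (glue s ω) m) '' K := by
      refine ⟨Fword F s x, hsC, fun k => ?_⟩
      rcases le_total k s.length with hk | hk
      · apply pref_mono H.hself (glue s ω) hk
        rw [glue_pref]
        exact Set.mem_image_of_mem _ hxK
      · obtain ⟨j, rfl⟩ := Nat.exists_eq_add_of_le hk
        rw [prefWord_add, glue_pref, glue_shift, Fword_append, Set.image_comp]
        exact Set.mem_image_of_mem _ (hω j)
    exact ⟨ω, ⟨s.length, hm1, glue s ω, hτcrit, (glue_shift s ω).symm⟩, hω⟩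
  · rintro ⟨ω, ⟨m, hm1, τ, ⟨z, hzCK, hzall⟩, hωτ⟩, hxall⟩
    have hxK : x ∈ K := by
      have := hxall 0
      rwa [prefWord_zero, Fword_nil, Set.image_id] at this
    refine ⟨hxK, prefWord τ m, ?_, ?_⟩
    · intro h
      have h2 := prefWord_length τ m
      rw [h] at h2
      simp at h2
      omega
    · have key : ∀ k, Fword F (prefWord τ m) x ∈ Fword F (prefWord τ k) '' K := by
        intro k
        rcases le_total k m with hk | hk
        · exact pref_mono H.hself τ hk (Set.mem_image_of_mem _ hxK)
        · obtain ⟨j, rfl⟩ := Nat.exists_eq_add_of_le hk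
          rw [prefWord_add, Fword_append, Set.image_comp]
          apply Set.mem_image_of_mem
          rw [← hωτ]
          exact hxall j
      have heq := pi_unique H.hN H.hc H.hF H.hKc key hzall
      rw [heq]
      exact hzCK

theorem piImage_finite : (piImage F K (postCrit F K)).Finite := by
  have hsub : piImage F K (postCrit F K) ⊆
      ⋃ ω ∈ postCrit F K, {x | ∀ m, x ∈ Fword F (prefWord ω m) '' K} := by
    rintro x ⟨ω, h1, h2⟩
    exact Set.mem_biUnion h1 h2
  refine Set.Finite.subset (Set.Finite.biUnion H.hpcf fun ω _ => ?_) hsub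
  apply Set.Subsingleton.finite
  intro a ha b hb
  exact pi_unique H.hN H.hc H.hF H.hKc ha hb

end SSS

end Aux6
/-- **Theorem 3.1.** Let `K` be a connected p.c.f. self-similar set. Then the canonical
nested structure `{F_wK, Λ_w}_{w ∈ W_*}`, with `Λ_w = {wi : 1 ≤ i ≤ N}` and
`φ_{w,u} = F_u ∘ F_w^{-1}`, is an f.r.f.t. nested structure of `K` with exactly one
equivalence class (`M = 1`); in particular the boundary `V_ϑ` of the root equals
`π(𝒫)` and is finite. -/
theorem stmt6 {d N : ℕ} (hN : 2 ≤ N) (F : Fin N → Pt d → Pt d) (c : Fin N → ℝ)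
    (hc : ∀ i, 0 < c i ∧ c i < 1)
    (hF : ∀ i x y, dist (F i x) (F i y) = c i * dist x y)
    (hFinj : ∀ i, Function.Injective (F i))
    (K : Set (Pt d)) (hKc : IsCompact K) (hKne : K.Nonempty)
    (hself : K = ⋃ i, F i '' K) (hconn : IsConnected K)
    (hpcf : (postCrit F K).Finite) :
    ∃ S : FRFTStructure d K (List (Fin N)),
      S.Kα = (fun w => Fword F w '' K) ∧
      S.child = (fun w => {u : List (Fin N) | ∃ i : Fin N, u = w ++ [i]}) ∧
      S.root = ([] : List (Fin N)) ∧
      S.φ = (fun w u => Fword F u ∘ Function.invFun (Fword F w)) ∧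
      (∀ w u : List (Fin N), simRel S.Kα w u) ∧
      Vset S.Kα S.child S.φ S.root S.root = piImage F K (postCrit F K) ∧
      (Vset S.Kα S.child S.φ S.root S.root).Finite := by
  have H : SSS F c K := ⟨hN, hc, hF, hFinj, hKc, hKne, hself, hpcf⟩
  refine ⟨{
    Kα := fun w => Fword F w '' K
    child := fun w => {u : List (Fin N) | ∃ i : Fin N, u = w ++ [i]}
    root := ([] : List (Fin N))
    countable := inferInstance
    inj := H.cell_inj
    compact := fun w => hKc.image (H.word_sim w).continuous
    connected := fun w => hconn.image _ (H.word_sim w).continuous.continuousOn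
    not_singleton := ?ns
    subset_K := Fword_image_subset hself
    root_eq := by simp [Fword_nil]
    child_finite := ?cf
    child_nontrivial := ?cnt
    child_union := ?cu
    offspring := fun w _ => ⟨w.length, (levels_canon _ _).mpr rfl⟩
    φ := fun w u => Fword F u ∘ Function.invFun (Fword F w)
    φ_isSim := fun a b _ => H.phi_sim a b
    φ_maps := fun a b _ => H.phi_maps a b
    φ_refl := H.phi_refl
    φ_comp := fun a b g _ _ => H.phi_comp a g b
    A1 := ?a1
    A2 := ?a2
    A3 := ?a3 }, rfl, rfl, rfl, rfl, fun w u => H.simRel_total w u, ?main, ?fin⟩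
  case ns =>
    rintro w ⟨x, hxe⟩
    obtain ⟨a, haK, b, hbK, hab⟩ := H.K_two_points
    have ha : Fword F w a ∈ ({x} : Set (Pt d)) := hxe ▸ Set.mem_image_of_mem _ haK
    have hb : Fword F w b ∈ ({x} : Set (Pt d)) := hxe ▸ Set.mem_image_of_mem _ hbK
    rw [Set.mem_singleton_iff] at ha hb
    exact hab (H.word_inj w (ha.trans hb.symm))
  case cf =>
    intro w
    apply Set.Finite.subset (Set.finite_range (fun i : Fin N => w ++ [i]))
    rintro u ⟨i, rfl⟩
    exact ⟨i, rfl⟩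
  case cnt =>
    intro w
    refine ⟨w ++ [⟨0, by omega⟩], ⟨_, rfl⟩, w ++ [⟨1, by omega⟩], ⟨_, rfl⟩, ?_⟩
    intro h
    have := List.append_cancel_left h
    simp only [List.cons.injEq, and_true] at this
    simpa using congrArg Fin.val this
  case cu =>
    intro w
    ext x
    simp only [Set.mem_iUnion, exists_prop, Set.mem_setOf_eq]
    constructor
    · rintro ⟨y, hyK, rfl⟩
      rw [hself] at hyK
      obtain ⟨i, hi⟩ := Set.mem_iUnion.mp hyK
      obtain ⟨z, hz, rfl⟩ := hi
      exact ⟨w ++ [i], ⟨i, rfl⟩, z, hz, by rw [Fword_append]; rfl⟩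
    · rintro ⟨u, ⟨i, rfl⟩, hx⟩
      rw [Fword_append, Set.image_comp, Fword_single] at hx
      obtain ⟨y, hy, rfl⟩ := hx
      exact Set.mem_image_of_mem _ (F_image_subset hself i hy)
  case a1 =>
    apply Set.Finite.subset (Set.finite_singleton
      (Set.univ : Set (List (Fin N))))
    rintro S ⟨α, rfl⟩
    rw [Set.mem_singleton_iff]
    exact Set.eq_univ_of_forall fun β => H.simRel_total α β
  case a2 =>
    rintro α α' hsim β ⟨i, rfl⟩
    refine ⟨α' ++ [i], ⟨⟨i, rfl⟩, H.simRel_total _ _, H.phi_append α α' i⟩, ?_⟩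
    rintro β'' ⟨⟨j, rfl⟩, _, hphi⟩
    rw [H.phi_cancel hphi]
  case a3 =>
    intro α
    show (Vset (fun w : List (Fin N) => Fword F w '' K) (fun w => {u : List (Fin N) | ∃ i : Fin N, u = w ++ [i]}) (fun w u => Fword F u ∘ Function.invFun (Fword F w)) ([] : List (Fin N)) α).Finite
    rw [H.Vset_eq_image α, H.Vroot_char, H.Vroot_piImage]
    exact (H.piImage_finite).image _
  case main =>
    show Vset (fun w : List (Fin N) => Fword F w '' K) (fun w => {u : List (Fin N) | ∃ i : Fin N, u = w ++ [i]}) (fun w u => Fword F u ∘ Function.invFun (Fword F w)) ([] : List (Fin N)) [] = piImage F K (postCrit F K)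
    exact (H.Vroot_char).trans (H.Vroot_piImage)
  case fin =>
    show (Vset (fun w : List (Fin N) => Fword F w '' K) (fun w => {u : List (Fin N) | ∃ i : Fin N, u = w ++ [i]}) (fun w u => Fword F u ∘ Function.invFun (Fword F w)) ([] : List (Fin N)) []).Finite
    rw [H.Vroot_char, H.Vroot_piImage]
    exact H.piImage_finite
end
end

section
/- Let K be a self-similar set with IFS {F_i}_{i=1}^N of contractive similitudes and c_* = min_i c_i. Then the following two conditions are equivalent: (1) there exists 0 < δ ≤ c_* such that L_δ(K) < ∞; (2) for every 0 < δ ≤ c_*, L_δ(K) < ∞. -/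
open Set

noncomputable section

/-- `c_w = c_{w_1}⋯c_{w_m}`, the similarity ratio of `F_w`. -/
def cword {N : ℕ} (c : Fin N → ℝ) (w : List (Fin N)) : ℝ := (w.map c).prod

/-- `(F_{w^{(1)}}K, …, F_{w^{(m)}}K)` (encoded by the words `w 0, …, w (m-1)`) is an
overlapping chain: the copies are distinct, none is contained in another, and each
`F_{w^{(i+1)}}K` has infinite intersection with the union of the preceding copies. -/
def IsOverlapChain {α : Type*} {N : ℕ} (F : Fin N → α → α) (K : Set α)
    (m : ℕ) (w : ℕ → List (Fin N)) : Prop :=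
  (∀ i < m, ∀ j < m, i ≠ j → Fword F (w i) '' K ≠ Fword F (w j) '' K) ∧
  (∀ i < m, ∀ j < m, i ≠ j → ¬ Fword F (w i) '' K ⊆ Fword F (w j) '' K) ∧
  (∀ i : ℕ, i + 1 < m →
    ((Fword F (w (i + 1)) '' K) ∩ ⋃ j ∈ Finset.range (i + 1), Fword F (w j) '' K).Infinite)

/-- A `δ`-overlapping chain: an overlapping chain all of whose members have comparable
similarity ratios: `δ ≤ c_{w^{(i)}}/c_{w^{(j)}} ≤ 1/δ`. -/
def IsDeltaChain {α : Type*} {N : ℕ} (F : Fin N → α → α) (c : Fin N → ℝ) (K : Set α)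
    (δ : ℝ) (m : ℕ) (w : ℕ → List (Fin N)) : Prop :=
  IsOverlapChain F K m w ∧
  ∀ i < m, ∀ j < m,
    δ ≤ cword c (w i) / cword c (w j) ∧ cword c (w i) / cword c (w j) ≤ 1 / δ

open Metric Bornology

set_option linter.unusedSectionVars false

namespace Stmt7

section Basics

variable {d N : ℕ} {F : Fin N → Pt d → Pt d} {c : Fin N → ℝ} {K : Set (Pt d)}

@[simp] lemma cword_nil : cword c [] = 1 := rfl

@[simp] lemma cword_cons (i : Fin N) (w : List (Fin N)) :
    cword c (i :: w) = c i * cword c w := by simp [cword]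

lemma cword_append (u v : List (Fin N)) :
    cword c (u ++ v) = cword c u * cword c v := by simp [cword]

lemma Fword_append (u v : List (Fin N)) :
    Fword F (u ++ v) = Fword F u ∘ Fword F v := by
  induction u with
  | nil => rfl
  | cons i u ih => simp [Fword, ih, Function.comp_assoc]

variable (hc : ∀ i, 0 < c i ∧ c i < 1)
  (hF : ∀ i x y, dist (F i x) (F i y) = c i * dist x y)
  (hKb : IsBounded K)
  (hself : K = ⋃ i, F i '' K)

include hc in
lemma cword_pos (w : List (Fin N)) : 0 < cword c w := by
  induction w with
  | nil => norm_num
  | cons i w ih => simpa [cword_cons] using mul_pos (hc i).1 ih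

include hc in
lemma cword_le_one (w : List (Fin N)) : cword c w ≤ 1 := by
  induction w with
  | nil => norm_num
  | cons i w ih =>
    rw [cword_cons]
    calc c i * cword c w ≤ 1 * 1 := by
          apply mul_le_mul (hc i).2.le ih (cword_pos hc w).le zero_le_one
      _ = 1 := by ring

include hF in
lemma dist_Fword (w : List (Fin N)) (x y : Pt d) :
    dist (Fword F w x) (Fword F w y) = cword c w * dist x y := by
  induction w with
  | nil => simp [Fword]
  | cons i w ih =>
    show dist (F i (Fword F w x)) (F i (Fword F w y)) = _
    rw [hF, ih, cword_cons]; ring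

include hself in
lemma img_subset (w : List (Fin N)) : Fword F w '' K ⊆ K := by
  induction w with
  | nil => simp [Fword]
  | cons i w ih =>
    rintro x ⟨y, hy, rfl⟩
    have h1 : Fword F w y ∈ K := ih ⟨y, hy, rfl⟩
    have h2 : F i (Fword F w y) ∈ F i '' K := ⟨_, h1, rfl⟩
    rw [hself]
    exact Set.mem_iUnion.2 ⟨i, h2⟩

include hself in
lemma img_append_subset (u v : List (Fin N)) :
    Fword F (u ++ v) '' K ⊆ Fword F u '' K := by
  rw [Fword_append, Set.image_comp]
  exact Set.image_mono (img_subset hself v)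

include hself in
lemma img_eq_iUnion (u : List (Fin N)) :
    Fword F u '' K = ⋃ j : Fin N, Fword F (u ++ [j]) '' K := by
  conv_lhs => rw [hself]
  rw [Set.image_iUnion]
  apply Set.iUnion_congr
  intro j
  rw [Fword_append, Set.image_comp]
  rfl

include hc hF hKb in
lemma img_bounded (w : List (Fin N)) : IsBounded (Fword F w '' K) := by
  rcases (Metric.isBounded_iff).1 hKb with ⟨C, hC⟩
  apply Metric.isBounded_iff.2
  refine ⟨cword c w * C, ?_⟩
  rintro x ⟨a, ha, rfl⟩ y ⟨b, hb, rfl⟩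
  rw [dist_Fword hF]
  exact mul_le_mul_of_nonneg_left (hC ha hb) (cword_pos hc w).le

include hc hF hKb in
lemma img_diam (w : List (Fin N)) :
    Metric.diam (Fword F w '' K) = cword c w * Metric.diam K := by
  have hpos := cword_pos hc w
  apply le_antisymm
  · apply Metric.diam_le_of_forall_dist_le (by positivity)
    rintro x ⟨a, ha, rfl⟩ y ⟨b, hb, rfl⟩
    rw [dist_Fword hF]
    exact mul_le_mul_of_nonneg_left (Metric.dist_le_diam_of_mem hKb ha hb) hpos.le
  · rw [mul_comm, ← le_div_iff₀ hpos]
    apply Metric.diam_le_of_forall_dist_le (by positivity)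
    intro a ha b hb
    rw [le_div_iff₀ hpos, mul_comm, ← dist_Fword hF w]
    exact Metric.dist_le_diam_of_mem (img_bounded hc hF hKb w) ⟨a, ha, rfl⟩ ⟨b, hb, rfl⟩

include hc hF hKb in
lemma ratio_le_of_subset (hKinf : K.Infinite) {u v : List (Fin N)}
    (h : Fword F u '' K ⊆ Fword F v '' K) : cword c u ≤ cword c v := by
  have hD : 0 < Metric.diam K := by
    obtain ⟨x, hx, y, hy, hxy⟩ := hKinf.nontrivial
    have := Metric.dist_le_diam_of_mem hKb hx hy
    have hd : 0 < dist x y := dist_pos.2 hxy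
    linarith
  have hle := Metric.diam_mono h (img_bounded hc hF hKb v)
  rw [img_diam hc hF hKb, img_diam hc hF hKb] at hle
  exact le_of_mul_le_mul_right (by linarith [hle]) hD

include hc hF in
lemma img_infinite (hKinf : K.Infinite) (w : List (Fin N)) :
    (Fword F w '' K).Infinite := by
  apply Set.Infinite.image _ hKinf
  intro x _ y _ h
  have hd := dist_Fword (c := c) hF w x y
  rw [h, dist_self] at hd
  have hpos := cword_pos hc w
  have : dist x y = 0 := by
    rcases mul_eq_zero.1 hd.symm with h' | h'
    · exact absurd h' (ne_of_gt hpos)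
    · exact h'
  exact dist_eq_zero.1 this

end Basics

lemma pigeon {α β : Type*} {S : Set α} (hS : S.Infinite) {t : Finset β} {f : β → Set α}
    (h : S ⊆ ⋃ x ∈ t, f x) : ∃ x ∈ t, (S ∩ f x).Infinite := by
  by_contra hcon
  push_neg at hcon
  have heq : S = ⋃ x ∈ t, S ∩ f x := by
    apply Set.eq_of_subset_of_subset
    · intro s hs
      rcases Set.mem_iUnion₂.1 (h hs) with ⟨x, hx, hfx⟩
      exact Set.mem_iUnion₂.2 ⟨x, hx, hs, hfx⟩
    · intro s hs
      rcases Set.mem_iUnion₂.1 hs with ⟨x, _, hfx, _⟩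
      exact hfx
  apply hS
  rw [heq]
  apply Set.Finite.biUnion t.finite_toSet
  intro x hx
  exact hcon x hx



section Chains

variable {d N : ℕ} {F : Fin N → Pt d → Pt d} {c : Fin N → ℝ} {K : Set (Pt d)}
  {cstar δ₀ : ℝ} {L₀ : ℕ}
variable (hc : ∀ i, 0 < c i ∧ c i < 1)
  (hF : ∀ i x y, dist (F i x) (F i y) = c i * dist x y)
  (hKb : IsBounded K)
  (hself : K = ⋃ i, F i '' K)
  (hcs : ∀ i, cstar ≤ c i) (hcs0 : 0 < cstar) (hcs1 : cstar < 1)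
  (hδ₀ : 0 < δ₀) (hδc : δ₀ ≤ cstar)
  (hL₀ : ∀ (m : ℕ) (w : ℕ → List (Fin N)), IsDeltaChain F c K δ₀ m w → m ≤ L₀)

include hδ₀ hδc hcs0 in
lemma sameband {θ x y : ℝ} (hθ : 0 < θ)
    (hx1 : cstar * θ ≤ x) (hx2 : x ≤ θ) (hy1 : cstar * θ ≤ y) (hy2 : y ≤ θ) :
    δ₀ ≤ x / y ∧ x / y ≤ 1 / δ₀ := by
  have hy0 : 0 < y := lt_of_lt_of_le (by positivity) hy1
  have hx0 : 0 < x := lt_of_lt_of_le (by positivity) hx1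
  constructor
  · rw [le_div_iff₀ hy0]
    calc δ₀ * y ≤ cstar * θ := by nlinarith
      _ ≤ x := hx1
  · rw [div_le_div_iff₀ hy0 (by positivity : (0:ℝ) < δ₀)] at *
    · nlinarith
  
include hδ₀ hδc hcs0 hL₀ in
lemma anchored (p : ℕ) (q : ℕ → List (Fin N)) (θ : ℝ) (hθ : 0 < θ)
    (hband : ∀ k < p, cstar * θ ≤ cword c (q k) ∧ cword c (q k) ≤ θ)
    (hdist : ∀ k < p, ∀ k' < p, k ≠ k' → Fword F (q k) '' K ≠ Fword F (q k') '' K)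
    (hnn : ∀ k < p, ∀ k' < p, k ≠ k' → ¬ Fword F (q k) '' K ⊆ Fword F (q k') '' K)
    (hanc : ∀ k, 0 < k → k < p → ((Fword F (q k) '' K) ∩ (Fword F (q 0) '' K)).Infinite) :
    p ≤ L₀ := by
  apply hL₀ p q
  refine ⟨⟨hdist, hnn, ?_⟩, ?_⟩
  · intro i hi
    apply Set.Infinite.mono (s := (Fword F (q (i+1)) '' K) ∩ (Fword F (q 0) '' K))
    · exact Set.inter_subset_inter_right _ (fun x hx => Set.mem_biUnion (Finset.mem_range.2 (Nat.succ_pos i)) hx)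
    · exact hanc (i+1) (Nat.succ_pos i) hi
  · intro i hi j hj
    exact sameband hcs0 hδ₀ hδc hθ (hband i hi).1 (hband i hi).2 (hband j hj).1 (hband j hj).2


variable {cmax : ℝ}

def coverW (c : Fin N → ℝ) (θ : ℝ) : ℕ → List (Fin N) → Finset (List (Fin N))
  | 0, u => {u}
  | (n+1), u =>
    if cword c u ≤ θ then {u}
    else Finset.univ.biUnion fun j : Fin N => coverW c θ n (u ++ [j])

lemma coverW_card (hN0 : 0 < N) (θ : ℝ) (n : ℕ) (u : List (Fin N)) :
    (coverW c θ n u).card ≤ N ^ n := by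
  induction n generalizing u with
  | zero => simp [coverW]
  | succ n ih =>
    rw [coverW]
    split
    · have : 1 ≤ N ^ (n+1) := Nat.one_le_pow _ _ hN0
      simpa using this
    · apply le_trans (Finset.card_biUnion_le)
      calc ∑ j : Fin N, (coverW c θ n (u ++ [j])).card ≤ ∑ _j : Fin N, N ^ n :=
            Finset.sum_le_sum (fun j _ => ih _)
        _ = N * N ^ n := by simp [Finset.sum_const, mul_comm]
        _ = N ^ (n+1) := by ring

lemma coverW_mem_ext {θ : ℝ} {n : ℕ} {u v : List (Fin N)} (h : v ∈ coverW c θ n u) :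
    ∃ t, v = u ++ t := by
  induction n generalizing u with
  | zero => simp [coverW] at h; exact ⟨[], by simp [h]⟩
  | succ n ih =>
    rw [coverW] at h
    split at h
    · simp at h; exact ⟨[], by simp [h]⟩
    · rcases Finset.mem_biUnion.1 h with ⟨j, _, hj⟩
      rcases ih hj with ⟨t, ht⟩
      exact ⟨j :: t, by simp [ht]⟩

include hself in
lemma coverW_cover (θ : ℝ) (n : ℕ) (u : List (Fin N)) :
    Fword F u '' K = ⋃ v ∈ coverW c θ n u, Fword F v '' K := by
  induction n generalizing u with
  | zero => simp [coverW]
  | succ n ih =>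
    rw [coverW]
    split_ifs
    · simp
    · rw [img_eq_iUnion hself u]
      apply Set.eq_of_subset_of_subset
      · intro x hx
        rcases Set.mem_iUnion.1 hx with ⟨j, hj⟩
        rw [ih (u ++ [j])] at hj
        rcases Set.mem_iUnion₂.1 hj with ⟨v, hv, hxv⟩
        exact Set.mem_iUnion₂.2 ⟨v, Finset.mem_biUnion.2 ⟨j, Finset.mem_univ j, hv⟩, hxv⟩
      · intro x hx
        rcases Set.mem_iUnion₂.1 hx with ⟨v, hv, hxv⟩
        rcases Finset.mem_biUnion.1 hv with ⟨j, _, hvj⟩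
        apply Set.mem_iUnion.2 ⟨j, _⟩
        rw [ih (u ++ [j])]
        exact Set.mem_iUnion₂.2 ⟨v, hvj, hxv⟩

include hc hcs in
lemma coverW_lower {θ : ℝ} (hθ : 0 ≤ θ) {n : ℕ} {u v : List (Fin N)} (h : v ∈ coverW c θ n u)
    (hu : cstar * θ < cword c u) : cstar * θ < cword c v := by
  induction n generalizing u with
  | zero => simp [coverW] at h; simpa [h] using hu
  | succ n ih =>
    rw [coverW] at h
    split at h
    · simp at h; simpa [h] using hu
    · rename_i hgt
      push_neg at hgt
      rcases Finset.mem_biUnion.1 h with ⟨j, _, hj⟩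
      apply ih hj
      rw [cword_append]
      simp only [cword_cons, cword_nil, mul_one]
      calc cstar * θ ≤ c j * θ := mul_le_mul_of_nonneg_right (hcs j) hθ
        _ < c j * cword c u := by
            have := (hc j).1
            nlinarith
        _ = cword c u * c j := mul_comm _ _

include hc in
lemma coverW_upper (hcm : ∀ i, c i ≤ cmax) (hcm0 : 0 < cmax) {θ : ℝ} {n : ℕ} {u v : List (Fin N)}
    (h : v ∈ coverW c θ n u) (hu : cmax ^ n * cword c u ≤ θ) : cword c v ≤ θ := by
  induction n generalizing u with
  | zero => simp [coverW] at h; simpa [h] using hu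
  | succ n ih =>
    rw [coverW] at h
    split at h
    · rename_i hle
      simp at h
      simpa [h] using hle
    · rcases Finset.mem_biUnion.1 h with ⟨j, _, hj⟩
      apply ih hj
      rw [cword_append]
      simp only [cword_cons, cword_nil, mul_one]
      have h1 : cmax ^ n * (cword c u * c j) ≤ cmax ^ n * (cword c u * cmax) := by
        apply mul_le_mul_of_nonneg_left _ (by positivity)
        exact mul_le_mul_of_nonneg_left (hcm j) (cword_pos hc u).le
      calc cmax ^ n * (cword c u * c j) ≤ cmax ^ n * (cword c u * cmax) := h1
        _ = cmax ^ (n+1) * cword c u := by ring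
        _ ≤ θ := hu


include hδ₀ hδc hcs0 hL₀ in
lemma clique_finset (S : Finset (List (Fin N))) (θ : ℝ) (hθ : 0 < θ)
    (hband : ∀ b ∈ S, cstar * θ ≤ cword c b ∧ cword c b ≤ θ)
    (hdist : ∀ b ∈ S, ∀ b' ∈ S, Fword F b '' K = Fword F b' '' K → b = b')
    (hnn : ∀ b ∈ S, ∀ b' ∈ S, b ≠ b' → ¬ Fword F b '' K ⊆ Fword F b' '' K)
    (P : Set (Pt d)) (hP : P.Infinite)
    (hPsub : ∀ b ∈ S, P ⊆ Fword F b '' K) :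
    S.card ≤ L₀ := by
  set t := S.card with ht
  let e := S.orderIsoOfFin ht.symm
  set q : ℕ → List (Fin N) := fun k => if h : k < t then (e ⟨k, h⟩ : List (Fin N)) else [] with hq
  have hqmem : ∀ k, (h : k < t) → q k ∈ S := by
    intro k h
    simp only [hq, dif_pos h]
    exact (e ⟨k, h⟩).2
  have hqval : ∀ k (h : k < t), q k = (e ⟨k, h⟩ : List (Fin N)) := by
    intro k h; simp only [hq, dif_pos h]
  have hqinj : ∀ k (hk : k < t) k' (hk' : k' < t), k ≠ k' → q k ≠ q k' := by
    intro k hk k' hk' hne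
    rw [hqval k hk, hqval k' hk']
    intro hval
    exact hne (by simpa using Fin.mk_eq_mk.1 (e.injective (Subtype.ext hval)))
  apply anchored hcs0 hδ₀ hδc hL₀ t q θ hθ
  · intro k hk; exact hband _ (hqmem k hk)
  · intro k hk k' hk' hne hcon
    exact hqinj k hk k' hk' hne (hdist _ (hqmem k hk) _ (hqmem k' hk') hcon)
  · intro k hk k' hk' hne
    exact hnn _ (hqmem k hk) _ (hqmem k' hk') (hqinj k hk k' hk' hne)
  · intro k hk0 hkt
    apply hP.mono
    exact Set.subset_inter (hPsub _ (hqmem k hkt)) (hPsub _ (hqmem 0 (lt_of_le_of_lt (Nat.zero_le _) hkt)))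

include hδ₀ hδc hcs0 hL₀ in
lemma star_finset (S : Finset (List (Fin N))) (g : List (Fin N)) (θ : ℝ) (hθ : 0 < θ)
    (hbandg : cstar * θ ≤ cword c g ∧ cword c g ≤ θ)
    (hband : ∀ b ∈ S, cstar * θ ≤ cword c b ∧ cword c b ≤ θ)
    (hdist : ∀ b ∈ S, ∀ b' ∈ S, Fword F b '' K = Fword F b' '' K → b = b')
    (hnn : ∀ b ∈ S, ∀ b' ∈ S, b ≠ b' → ¬ Fword F b '' K ⊆ Fword F b' '' K)
    (hgd : ∀ b ∈ S, Fword F b '' K ≠ Fword F g '' K)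
    (hgn1 : ∀ b ∈ S, ¬ Fword F b '' K ⊆ Fword F g '' K)
    (hgn2 : ∀ b ∈ S, ¬ Fword F g '' K ⊆ Fword F b '' K)
    (hmeet : ∀ b ∈ S, ((Fword F b '' K) ∩ (Fword F g '' K)).Infinite) :
    S.card + 1 ≤ L₀ := by
  set t := S.card with ht
  let e := S.orderIsoOfFin ht.symm
  set q : ℕ → List (Fin N) := fun k =>
    if k = 0 then g else if h : k - 1 < t then (e ⟨k - 1, h⟩ : List (Fin N)) else [] with hq
  have hqmem : ∀ k, 0 < k → (h : k - 1 < t) → q k ∈ S := by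
    intro k hk h
    simp only [hq, if_neg (Nat.pos_iff_ne_zero.1 hk), dif_pos h]
    exact (e ⟨k - 1, h⟩).2
  have hqval : ∀ k, 0 < k → (h : k - 1 < t) → q k = (e ⟨k - 1, h⟩ : List (Fin N)) := by
    intro k hk h; simp only [hq, if_neg (Nat.pos_iff_ne_zero.1 hk), dif_pos h]
  have hq0 : q 0 = g := by simp [hq]
  have hqinj : ∀ k (hk0 : 0 < k) (hk : k - 1 < t) k' (hk0' : 0 < k') (hk' : k' - 1 < t),
      k ≠ k' → q k ≠ q k' := by
    intro k hk0 hk k' hk0' hk' hne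
    rw [hqval k hk0 hk, hqval k' hk0' hk']
    intro hval
    have := Fin.mk_eq_mk.1 (e.injective (Subtype.ext hval))
    omega
  apply anchored hcs0 hδ₀ hδc hL₀ (t+1) q θ hθ
  · intro k hk
    rcases Nat.eq_zero_or_pos k with rfl | hk0
    · rw [hq0]; exact hbandg
    · exact hband _ (hqmem k hk0 (by omega))
  · intro k hk k' hk' hne
    rcases Nat.eq_zero_or_pos k with rfl | hk0 <;> rcases Nat.eq_zero_or_pos k' with rfl | hk0'
    · omega
    · rw [hq0]; exact fun hcon => hgd _ (hqmem k' hk0' (by omega)) hcon.symm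
    · rw [hq0]; exact hgd _ (hqmem k hk0 (by omega))
    · intro hcon
      exact hqinj k hk0 (by omega) k' hk0' (by omega) hne
        (hdist _ (hqmem k hk0 (by omega)) _ (hqmem k' hk0' (by omega)) hcon)
  · intro k hk k' hk' hne
    rcases Nat.eq_zero_or_pos k with rfl | hk0 <;> rcases Nat.eq_zero_or_pos k' with rfl | hk0'
    · omega
    · rw [hq0]; exact hgn2 _ (hqmem k' hk0' (by omega))
    · rw [hq0]; exact hgn1 _ (hqmem k hk0 (by omega))
    · intro hcon
      exact hnn _ (hqmem k hk0 (by omega)) _ (hqmem k' hk0' (by omega))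
        (hqinj k hk0 (by omega) k' hk0' (by omega) hne) hcon
  · intro k hk0 hk
    rw [hq0]
    exact hmeet _ (hqmem k hk0 (by omega))


def Vnu (N L₀ : ℕ) : ℕ → ℕ
  | 0 => 0
  | n+1 => N * (1 + Vnu N L₀ n + L₀ + L₀)

include hc hF hKb hself hcs hcs0 hδ₀ hδc hL₀ in
lemma nu_bound (hKinf : K.Infinite) (hN0 : 0 < N) (hcm : ∀ i, c i ≤ cmax) (hcm0 : 0 < cmax) :
    ∀ (n : ℕ) (β : ℝ) (ua : List (Fin N)) (B : Finset (List (Fin N))),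
    cstar ≤ β → cmax ^ n ≤ β →
    (∀ b ∈ B, Fword F b '' K ⊆ Fword F ua '' K ∧ Fword F b '' K ≠ Fword F ua '' K) →
    (∀ b ∈ B, β * cword c ua < cword c b) →
    (∀ b ∈ B, ∀ b' ∈ B, Fword F b '' K = Fword F b' '' K → b = b') →
    (∀ b ∈ B, ∀ b' ∈ B, b ≠ b' → ¬ Fword F b '' K ⊆ Fword F b' '' K) →
    B.card ≤ Vnu N L₀ n := by
  intro n
  induction n with
  | zero =>
    intro β ua B hβ1 hβ2 hsub hrat hinj hnn
    suffices h : B = ∅ by simp [h, Vnu]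
    rw [Finset.eq_empty_iff_forall_notMem]
    intro b hb
    have h1 : cword c b ≤ cword c ua :=
      ratio_le_of_subset hc hF hKb hKinf (hsub b hb).1
    have h2 := hrat b hb
    have h3 : (1:ℝ) ≤ β := by simpa using hβ2
    have h4 := cword_pos hc ua
    nlinarith
  | succ n ih =>
    intro β ua B hβ1 hβ2 hsub hrat hinj hnn
    classical
    have hexφ : ∀ b ∈ B, ∃ j : Fin N,
        ((Fword F b '' K) ∩ (Fword F (ua ++ [j]) '' K)).Infinite := by
      intro b hb
      have hinf : (Fword F b '' K).Infinite := img_infinite hc hF hKinf b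
      have hcover : Fword F b '' K ⊆
          ⋃ j ∈ (Finset.univ : Finset (Fin N)), Fword F (ua ++ [j]) '' K := by
        intro x hx
        have hx2 := (hsub b hb).1 hx
        rw [img_eq_iUnion hself ua] at hx2
        rcases Set.mem_iUnion.1 hx2 with ⟨j, hj⟩
        exact Set.mem_biUnion (Finset.mem_univ j) hj
      rcases pigeon hinf hcover with ⟨j, _, hj⟩
      exact ⟨j, hj⟩
    set φ : List (Fin N) → Fin N := fun b =>
      if h : ∃ j : Fin N, ((Fword F b '' K) ∩ (Fword F (ua ++ [j]) '' K)).Infinite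
      then h.choose else ⟨0, hN0⟩ with hφdef
    have hφ : ∀ b ∈ B, ((Fword F b '' K) ∩ (Fword F (ua ++ [φ b]) '' K)).Infinite := by
      intro b hb
      have h := hexφ b hb
      simp only [hφdef, dif_pos h]
      exact h.choose_spec
    rw [Finset.card_eq_sum_card_fiberwise (fun b _ => Finset.mem_univ (φ b))]
    have hperj : ∀ j : Fin N,
        (B.filter fun b => φ b = j).card ≤ 1 + Vnu N L₀ n + L₀ + L₀ := by
      intro j
      set ch := ua ++ [j] with hch
      set Bj := B.filter (fun b => φ b = j) with hBj
      have hBjB : Bj ⊆ B := Finset.filter_subset _ _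
      have hchw : cword c ch = cword c ua * c j := by
        rw [hch, cword_append]; simp
      set s1 := Bj.filter (fun b => Fword F b '' K = Fword F ch '' K) with hs1
      set s2 := Bj.filter (fun b => Fword F b '' K ⊆ Fword F ch '' K ∧
        Fword F b '' K ≠ Fword F ch '' K) with hs2
      set s3 := Bj.filter (fun b => Fword F ch '' K ⊆ Fword F b '' K ∧
        Fword F b '' K ≠ Fword F ch '' K) with hs3
      set s4 := Bj.filter (fun b => ¬ Fword F b '' K ⊆ Fword F ch '' K ∧
        ¬ Fword F ch '' K ⊆ Fword F b '' K) with hs4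
      have hsplit : Bj ⊆ ((s1 ∪ s2) ∪ s3) ∪ s4 := by
        intro b hb
        simp only [hs1, hs2, hs3, hs4, Finset.mem_union, Finset.mem_filter]
        by_cases h1 : Fword F b '' K = Fword F ch '' K
        · exact Or.inl (Or.inl (Or.inl ⟨hb, h1⟩))
        · by_cases h2 : Fword F b '' K ⊆ Fword F ch '' K
          · exact Or.inl (Or.inl (Or.inr ⟨hb, h2, h1⟩))
          · by_cases h3 : Fword F ch '' K ⊆ Fword F b '' K
            · exact Or.inl (Or.inr ⟨hb, h3, h1⟩)
            · exact Or.inr ⟨hb, h2, h3⟩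
      have hcard : Bj.card ≤ s1.card + s2.card + s3.card + s4.card := by
        calc Bj.card ≤ (((s1 ∪ s2) ∪ s3) ∪ s4).card := Finset.card_le_card hsplit
          _ ≤ ((s1 ∪ s2) ∪ s3).card + s4.card := Finset.card_union_le _ _
          _ ≤ (s1 ∪ s2).card + s3.card + s4.card := by
              have := Finset.card_union_le (s1 ∪ s2) s3
              omega
          _ ≤ s1.card + s2.card + s3.card + s4.card := by
              have := Finset.card_union_le s1 s2
              omega
      have hs1card : s1.card ≤ 1 := by
        apply Finset.card_le_one.2
        intro a ha b hb
        rw [hs1, Finset.mem_filter] at ha hb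
        exact hinj a (hBjB ha.1) b (hBjB hb.1) (ha.2.trans hb.2.symm)
      have hs2card : s2.card ≤ Vnu N L₀ n := by
        apply ih (β / c j) ch s2
        · rw [le_div_iff₀ (hc j).1]
          nlinarith [(hc j).2, hcs0]
        · rw [le_div_iff₀ (hc j).1]
          have h0 : (0:ℝ) ≤ cmax ^ n := pow_nonneg hcm0.le n
          nlinarith [hcm j, pow_succ cmax n]
        · intro b hb
          rw [hs2, Finset.mem_filter] at hb
          exact hb.2
        · intro b hb
          rw [hs2, Finset.mem_filter] at hb
          have := hrat b (hBjB hb.1)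
          rw [hchw]
          have hcj := (hc j).1
          calc β / c j * (cword c ua * c j) = β * cword c ua := by
                field_simp
            _ < cword c b := this
        · intro b hb b' hb'
          exact hinj b (hBjB (Finset.mem_of_mem_filter _ hb)) b'
            (hBjB (Finset.mem_of_mem_filter _ hb'))
        · intro b hb b' hb'
          exact hnn b (hBjB (Finset.mem_of_mem_filter _ hb)) b'
            (hBjB (Finset.mem_of_mem_filter _ hb'))
      have hbandB : ∀ b ∈ B, cstar * cword c ua ≤ cword c b ∧ cword c b ≤ cword c ua := by
        intro b hb
        constructor
        · have h1 := hrat b hb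
          have h2 := cword_pos hc ua
          nlinarith
        · exact ratio_le_of_subset hc hF hKb hKinf (hsub b hb).1
      have hs3card : s3.card ≤ L₀ := by
        apply clique_finset hcs0 hδ₀ hδc hL₀ s3 (cword c ua) (cword_pos hc ua)
        · intro b hb
          exact hbandB b (hBjB (Finset.mem_of_mem_filter _ hb))
        · intro b hb b' hb'
          exact hinj b (hBjB (Finset.mem_of_mem_filter _ hb)) b'
            (hBjB (Finset.mem_of_mem_filter _ hb'))
        · intro b hb b' hb'
          exact hnn b (hBjB (Finset.mem_of_mem_filter _ hb)) b'
            (hBjB (Finset.mem_of_mem_filter _ hb'))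
        · exact img_infinite hc hF hKinf ch
        · intro b hb
          rw [hs3, Finset.mem_filter] at hb
          exact hb.2.1
      have hs4card : s4.card ≤ L₀ := by
        apply Nat.le_of_succ_le
        apply star_finset hcs0 hδ₀ hδc hL₀ s4 ch (cword c ua) (cword_pos hc ua)
        · constructor
          · rw [hchw]
            have h2 := cword_pos hc ua
            nlinarith [hcs j]
          · rw [hchw]
            have h2 := cword_pos hc ua
            nlinarith [(hc j).2, (hc j).1]
        · intro b hb
          exact hbandB b (hBjB (Finset.mem_of_mem_filter _ hb))
        · intro b hb b' hb'
          exact hinj b (hBjB (Finset.mem_of_mem_filter _ hb)) b'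
            (hBjB (Finset.mem_of_mem_filter _ hb'))
        · intro b hb b' hb'
          exact hnn b (hBjB (Finset.mem_of_mem_filter _ hb)) b'
            (hBjB (Finset.mem_of_mem_filter _ hb'))
        · intro b hb
          rw [hs4, Finset.mem_filter] at hb
          intro hcon
          exact hb.2.1 (le_of_eq hcon)
        · intro b hb
          rw [hs4, Finset.mem_filter] at hb
          exact hb.2.1
        · intro b hb
          rw [hs4, Finset.mem_filter] at hb
          exact hb.2.2
        · intro b hb
          have hbBj : b ∈ Bj := Finset.mem_of_mem_filter _ hb
          have hbB : b ∈ B := hBjB hbBj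
          have hφj : φ b = j := by
            rw [hBj, Finset.mem_filter] at hbBj
            exact hbBj.2
          have := hφ b hbB
          rw [hφj] at this
          exact this
      omega
    calc ∑ j : Fin N, (B.filter fun b => φ b = j).card
        ≤ ∑ _j : Fin N, (1 + Vnu N L₀ n + L₀ + L₀) :=
          Finset.sum_le_sum (fun j _ => hperj j)
      _ = N * (1 + Vnu N L₀ n + L₀ + L₀) := by simp [Finset.sum_const, mul_comm]
      _ = Vnu N L₀ (n+1) := rfl


include hc hF hKb hself hcs hcs0 hcs1 hδ₀ hδc hL₀ in
set_option maxHeartbeats 2000000 in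
lemma main_bound (hKinf : K.Infinite) (hN0 : 0 < N)
    (hcm : ∀ i, c i ≤ cmax) (hcm0 : 0 < cmax) (hcm1 : cmax < 1)
    (δ : ℝ) (hδ : 0 < δ) :
    ∃ Λ : ℕ, ∀ (m : ℕ) (w : ℕ → List (Fin N)), IsDeltaChain F c K δ m w → m ≤ Λ := by
  classical
  obtain ⟨Kb, hKb0⟩ : ∃ n, cstar ^ n < δ := exists_pow_lt_of_lt_one hδ hcs1
  have hKb1 : cstar ^ (Kb + 1) < δ := by
    calc cstar ^ (Kb + 1) ≤ cstar ^ Kb := by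
          apply pow_le_pow_of_le_one hcs0.le hcs1.le
          omega
      _ < δ := hKb0
  obtain ⟨n₂, hn₂⟩ : ∃ n, cmax ^ n < cstar := exists_pow_lt_of_lt_one hcs0 hcm1
  obtain ⟨n₃, hn₃⟩ : ∃ n, cmax ^ n < cstar ^ (Kb + 1) :=
    exists_pow_lt_of_lt_one (pow_pos hcs0 _) hcm1
  set κ₀ : ℕ := 1 + Vnu N L₀ n₂ + L₀ + L₀ with hκ₀
  refine ⟨L₀ * (Kb + 1) * (N ^ n₃ * κ₀), ?_⟩
  intro m w hchain
  obtain ⟨⟨hdist, hnn, hinf⟩, hratio⟩ := hchain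
  rcases Nat.eq_zero_or_pos m with rfl | hm
  · exact Nat.zero_le _
  -- notation
  set r : ℕ → ℝ := fun i => cword c (w i) with hr
  set A : ℕ → Set (Pt d) := fun i => Fword F (w i) '' K with hA
  -- the maximal ratio T
  have hTne : ((Finset.range m).image r).Nonempty :=
    ⟨r 0, Finset.mem_image_of_mem r (Finset.mem_range.2 hm)⟩
  set T := ((Finset.range m).image r).max' hTne with hT
  obtain ⟨i₀, hi₀m, hi₀⟩ : ∃ i₀, i₀ < m ∧ r i₀ = T := by
    have := Finset.max'_mem _ hTne
    rw [Finset.mem_image] at this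
    obtain ⟨i₀, hi₀, h⟩ := this
    exact ⟨i₀, Finset.mem_range.1 hi₀, h⟩
  have hTub : ∀ i < m, r i ≤ T := fun i hi =>
    Finset.le_max' _ _ (Finset.mem_image_of_mem r (Finset.mem_range.2 hi))
  have hT0 : 0 < T := hi₀ ▸ cword_pos hc (w i₀)
  have hT1 : T ≤ 1 := hi₀ ▸ cword_le_one hc (w i₀)
  have hrpos : ∀ i, 0 < r i := fun i => cword_pos hc (w i)
  have hrlow : ∀ i < m, δ * T ≤ r i := by
    intro i hi
    have h1 : δ ≤ r i / r i₀ := (hratio i hi i₀ hi₀m).1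
    rw [hi₀] at h1
    rw [le_div_iff₀ hT0] at h1
    linarith
  -- ancestors
  have hex : ∀ i, i < m → ∃ k, cword c ((w i).take k) ≤ T := by
    intro i hi
    exact ⟨(w i).length, by rw [List.take_length]; exact hTub i hi⟩
  set ku : ℕ → ℕ := fun i => if h : i < m then Nat.find (hex i h) else 0 with hku
  set u : ℕ → List (Fin N) := fun i => (w i).take (ku i) with hu
  set Ah : ℕ → Set (Pt d) := fun i => Fword F (u i) '' K with hAh
  have hanc_ub : ∀ i < m, cword c (u i) ≤ T := by
    intro i hi
    simp only [hu, hku, dif_pos hi]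
    exact Nat.find_spec (hex i hi)
  have hanc_lb : ∀ i < m, cstar * T < cword c (u i) := by
    intro i hi
    simp only [hu, hku, dif_pos hi]
    rcases Nat.eq_zero_or_pos (Nat.find (hex i hi)) with h0 | hpos
    · rw [h0]
      simp only [List.take_zero, cword_nil]
      nlinarith
    · obtain ⟨k, hk⟩ := Nat.exists_eq_succ_of_ne_zero (Nat.pos_iff_ne_zero.1 hpos)
      have hklen : Nat.find (hex i hi) ≤ (w i).length :=
        Nat.find_le (by rw [List.take_length]; exact hTub i hi)
      have hklt : k < (w i).length := by omega
      have hmin : ¬ cword c ((w i).take k) ≤ T := Nat.find_min (hex i hi) (by omega)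
      push_neg at hmin
      rw [hk, List.take_succ, List.getElem?_eq_getElem hklt]
      rw [cword_append]
      simp only [Option.toList, cword_cons, cword_nil]
      have hc1 := (hc ((w i)[k])).1
      have hc2 := hcs ((w i)[k])
      have h3 := cword_pos hc ((w i).take k)
      calc cstar * T ≤ T * c ((w i)[k]) := by nlinarith
        _ < cword c ((w i).take k) * (c ((w i)[k]) * 1) := by nlinarith
  have hAsub : ∀ i < m, A i ⊆ Ah i := by
    intro i hi
    have : w i = u i ++ (w i).drop (ku i) := by
      simp only [hu]
      rw [List.take_append_drop]
    calc A i = Fword F (u i ++ (w i).drop (ku i)) '' K := by rw [hA]; rw [← this]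
      _ ⊆ Ah i := img_append_subset hself _ _
  -- maximal ancestors
  set IsMax : ℕ → Prop := fun j => ∀ j' < m, Ah j ⊆ Ah j' → Ah j' = Ah j with hIsMax
  have hdomex : ∀ i < m, ∃ j < m, IsMax j ∧ Ah i ⊆ Ah j := by
    intro i hi
    have hfin : ({j | j < m ∧ Ah i ⊆ Ah j}).Finite :=
      Set.Finite.subset (Set.finite_Iio m) (fun j hj => hj.1)
    obtain ⟨a, ⟨ham, hia⟩, hmax⟩ :=
      Set.Finite.exists_maximalFor (fun j => Ah j) _ hfin ⟨i, hi, subset_rfl⟩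
    refine ⟨a, ham, ?_, hia⟩
    intro k hk hsub
    exact Set.Subset.antisymm (hmax ⟨hk, hia.trans hsub⟩ hsub) hsub
  set canon : ℕ → ℕ := fun j => Nat.find (⟨j, rfl⟩ : ∃ j', Ah j' = Ah j) with hcanon
  have hcanon_eq : ∀ j, Ah (canon j) = Ah j := fun j => Nat.find_spec (⟨j, rfl⟩ : ∃ j', Ah j' = Ah j)
  have hcanon_le : ∀ j, canon j ≤ j := fun j => Nat.find_le rfl
  have hcanon_min : ∀ j j', Ah j' = Ah j → canon j ≤ j' := fun j j' h => Nat.find_min' _ h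
  have hcanon_idem : ∀ j, canon (canon j) = canon j := by
    intro j
    apply le_antisymm (hcanon_le _)
    apply hcanon_min j (canon (canon j))
    exact (hcanon_eq (canon j)).trans (hcanon_eq j)
  have hcanon_congr : ∀ j j', Ah j' = Ah j → canon j' = canon j := by
    intro j j' h
    apply le_antisymm
    · exact hcanon_min j' (canon j) ((hcanon_eq j).trans h.symm)
    · exact hcanon_min j (canon j') ((hcanon_eq j').trans h)
  set M : Finset ℕ := (Finset.range m).filter (fun j => IsMax j ∧ canon j = j) with hM
  have hMlt : ∀ j ∈ M, j < m := by
    intro j hj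
    rw [hM, Finset.mem_filter, Finset.mem_range] at hj
    exact hj.1
  have hMmax : ∀ j ∈ M, IsMax j := by
    intro j hj
    rw [hM, Finset.mem_filter] at hj
    exact hj.2.1
  have hMdom : ∀ i < m, ∃ j ∈ M, Ah i ⊆ Ah j := by
    intro i hi
    obtain ⟨j0, hj0m, hj0max, hj0sub⟩ := hdomex i hi
    refine ⟨canon j0, ?_, hj0sub.trans (hcanon_eq j0).symm.subset⟩
    rw [hM, Finset.mem_filter, Finset.mem_range]
    refine ⟨lt_of_le_of_lt (hcanon_le j0) hj0m, ?_, hcanon_idem j0⟩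
    intro k hk hsub
    rw [hcanon_eq j0] at hsub ⊢
    exact hj0max k hk hsub
  have hMdistinct : ∀ j ∈ M, ∀ j' ∈ M, Ah j = Ah j' → j = j' := by
    intro j hj j' hj' h
    rw [hM, Finset.mem_filter] at hj hj'
    have h1 : canon j' ≤ j := hcanon_min j' j h
    have h2 : canon j ≤ j' := hcanon_min j j' h.symm
    have e1 : canon j = j := hj.2.2
    have e2 : canon j' = j' := hj'.2.2
    omega
  have hMnonnest : ∀ j ∈ M, ∀ j' ∈ M, Ah j ⊆ Ah j' → j = j' := by
    intro j hj j' hj' hsub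
    exact hMdistinct j hj j' hj' (hMmax j hj j' (hMlt j' hj') hsub).symm
  -- keys and codes
  set key : ℕ → ℕ := fun j => Nat.find (⟨j, subset_rfl⟩ : ∃ t, Ah t ⊆ Ah j) with hkey
  have hkey_spec : ∀ j, Ah (key j) ⊆ Ah j := fun j => Nat.find_spec (⟨j, subset_rfl⟩ : ∃ t, Ah t ⊆ Ah j)
  have hkey_le : ∀ j, key j ≤ j := fun j => Nat.find_le subset_rfl
  have hkey_min : ∀ j t, Ah t ⊆ Ah j → key j ≤ t := fun j t h => Nat.find_min' _ h
  set code : ℕ → ℕ := fun j => j + m * key j with hcode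
  have hcode_mod : ∀ j, j < m → code j % m = j := by
    intro j hj
    simp only [hcode]
    rw [Nat.add_mul_mod_self_left]
    exact Nat.mod_eq_of_lt hj
  have hcode_div : ∀ j, j < m → code j / m = key j := by
    intro j hj
    simp only [hcode]
    rw [Nat.add_mul_div_left _ _ hm]
    rw [Nat.div_eq_of_lt hj]
    omega
  set M' : Finset ℕ := M.image code with hM'
  have hMcard : M.card = M'.card := by
    rw [hM']
    refine (Finset.card_image_of_injOn ?_).symm
    intro j hj j' hj' h
    have h1 := hcode_mod j (hMlt j hj)
    have h2 := hcode_mod j' (hMlt j' hj')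
    rw [← h1, ← h2, h]
  set p := M'.card with hp
  set e := M'.orderIsoOfFin rfl with he
  set idx : ℕ → ℕ := fun t => if h : t < p then ((e ⟨t, h⟩ : ℕ) % m) else 0 with hidx
  have hidx_spec : ∀ t (h : t < p), idx t ∈ M ∧ code (idx t) = (e ⟨t, h⟩ : ℕ) := by
    intro t h
    have hmem : ((e ⟨t, h⟩ : ℕ)) ∈ M.image code := (e ⟨t, h⟩).2
    rw [Finset.mem_image] at hmem
    obtain ⟨j, hjM, hjc⟩ := hmem
    have : idx t = j := by
      simp only [hidx, dif_pos h, ← hjc, hcode_mod j (hMlt j hjM)]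
    rw [this, hjc]
    exact ⟨hjM, rfl⟩
  have hidx_lt : ∀ t (h : t < p), idx t < m := fun t h => hMlt _ (hidx_spec t h).1
  have hidx_key : ∀ t (h : t < p), key (idx t) = (e ⟨t, h⟩ : ℕ) / m := by
    intro t h
    rw [← (hidx_spec t h).2, hcode_div _ (hidx_lt t h)]
  have hidx_inj : ∀ t (ht : t < p) t' (ht' : t' < p), t ≠ t' → idx t ≠ idx t' := by
    intro t ht t' ht' hne hcon
    have h1 := (hidx_spec t ht).2
    have h2 := (hidx_spec t' ht').2
    rw [hcon] at h1
    have : (⟨t, ht⟩ : Fin p) = ⟨t', ht'⟩ := e.injective (Subtype.ext (h1.symm.trans h2))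
    exact hne (by simpa using this)
  have hkey_mono : ∀ t (ht : t < p) t' (ht' : t' < p), t ≤ t' → key (idx t) ≤ key (idx t') := by
    intro t ht t' ht' hle
    rw [hidx_key t ht, hidx_key t' ht']
    apply Nat.div_le_div_right
    exact e.monotone (by simpa using hle)
  -- get surjectivity onto M
  have hidx_surj : ∀ j ∈ M, ∃ t, ∃ (h : t < p), idx t = j := by
    intro j hj
    have hmem : code j ∈ M' := Finset.mem_image_of_mem code hj
    set t := e.symm ⟨code j, hmem⟩ with htdef
    refine ⟨(t : ℕ), t.2, ?_⟩
    have : (e ⟨(t : ℕ), t.2⟩ : ℕ) = code j := by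
      have : (⟨(t : ℕ), t.2⟩ : Fin p) = t := rfl
      rw [this, htdef]
      simp
    simp only [hidx, dif_pos t.2, this, hcode_mod j (hMlt j hj)]
    exact dif_pos t.2
  -- the ancestors chain is a δ₀-chain hence M is small
  have hMle : M.card ≤ L₀ := by
    rw [hMcard]
    apply hL₀ p (fun t => u (idx t))
    refine ⟨⟨?_, ?_, ?_⟩, ?_⟩
    · intro k hk k' hk' hne hcon
      exact hidx_inj k hk k' hk' hne (hMdistinct _ (hidx_spec k hk).1 _ (hidx_spec k' hk').1 hcon)
    · intro k hk k' hk' hne hcon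
      exact hidx_inj k hk k' hk' hne (hMnonnest _ (hidx_spec k hk).1 _ (hidx_spec k' hk').1 hcon)
    · intro t htp
      have htp' : t < p := by omega
      have h0p : 0 < p := by omega
      have hj1M := (hidx_spec (t+1) htp).1
      have hkj1 : Ah (key (idx (t+1))) ⊆ Ah (idx (t+1)) := hkey_spec (idx (t+1))
      have hsubU : ∀ s : ℕ, s < t + 1 → Fword F (u (idx s)) '' K ⊆
          ⋃ j ∈ Finset.range (t+1), Fword F (u (idx j)) '' K := by
        intro s hs x hx
        exact Set.mem_iUnion₂.2 ⟨s, Finset.mem_range.2 hs, hx⟩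
      rcases Nat.eq_zero_or_pos (key (idx (t+1))) with hk0 | hkpos
      · have hkey0 : key (idx 0) = 0 := by
          have hmono := hkey_mono 0 h0p (t+1) htp (Nat.zero_le _)
          omega
        have hsub0 : Ah 0 ⊆ Ah (idx 0) := by
          have h := hkey_spec (idx 0)
          rwa [hkey0] at h
        have hsub1 : Ah 0 ⊆ Ah (idx (t+1)) := by
          have h := hkj1
          rwa [hk0] at h
        apply Set.Infinite.mono (s := Ah 0)
        · exact Set.subset_inter hsub1 (hsub0.trans (hsubU 0 (by omega)))
        · exact img_infinite hc hF hKinf _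
      · obtain ⟨k0, hk0⟩ := Nat.exists_eq_succ_of_ne_zero (Nat.pos_iff_ne_zero.1 hkpos)
        have hkm : key (idx (t+1)) < m := lt_of_le_of_lt (hkey_le _) (hidx_lt _ htp)
        have hk0m : k0 + 1 < m := by omega
        have hchain := hinf k0 hk0m
        apply Set.Infinite.mono (s := A (k0 + 1) ∩ ⋃ j ∈ Finset.range (k0 + 1), A j)
        · apply Set.inter_subset_inter
          · have h := (hAsub _ hkm).trans hkj1
            rw [hk0] at h
            exact h
          · intro x hx
            rcases Set.mem_iUnion₂.1 hx with ⟨j, hjk, hxj⟩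
            have hjlt : j < k0 + 1 := Finset.mem_range.1 hjk
            have hjm : j < m := by omega
            obtain ⟨dj, hdjM, hdjsub⟩ := hMdom j hjm
            obtain ⟨rt, hrt, hrteq⟩ := hidx_surj dj hdjM
            have hkdj : key dj ≤ j := hkey_min dj j hdjsub
            have hrtlt : rt < t + 1 := by
              by_contra hcon
              push_neg at hcon
              have hmono := hkey_mono (t+1) htp rt hrt hcon
              rw [hrteq] at hmono
              omega
            apply (hsubU rt hrtlt)
            rw [← hrteq] at hdjsub
            exact ((hAsub j hjm).trans hdjsub) hxj
        · exact hchain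
    · intro k hk k' hk'
      exact sameband hcs0 hδ₀ hδc hT0 (hanc_lb _ (hidx_lt k hk)).le (hanc_ub _ (hidx_lt k hk))
        (hanc_lb _ (hidx_lt k' hk')).le (hanc_ub _ (hidx_lt k' hk'))
  -- band classification
  set band : ℕ → ℕ := fun i => Nat.findGreatest (fun b => r i ≤ cstar ^ b * T) Kb with hbandd
  have hband_le : ∀ i, band i ≤ Kb := fun i => Nat.findGreatest_le Kb
  have hband_ub : ∀ i < m, r i ≤ cstar ^ (band i) * T := by
    intro i hi
    exact Nat.findGreatest_spec (P := fun b => r i ≤ cstar ^ b * T) (Nat.zero_le Kb)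
      (by simpa using hTub i hi)
  have hband_lb : ∀ i < m, cstar ^ (band i + 1) * T < r i := by
    intro i hi
    rcases Nat.lt_or_ge (band i) Kb with h | h
    · have hgr := Nat.findGreatest_is_greatest (P := fun b => r i ≤ cstar ^ b * T) (n := Kb)
        (k := band i + 1) (Nat.lt_succ_self (band i)) (by omega)
      have hgr' : ¬ (r i ≤ cstar ^ (band i + 1) * T) := hgr
      exact lt_of_not_ge hgr'
    · have hbk : band i = Kb := le_antisymm (hband_le i) h
      calc cstar ^ (band i + 1) * T = cstar ^ (Kb + 1) * T := by rw [hbk]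
        _ < δ * T := by nlinarith [hKb1, hT0]
        _ ≤ r i := hrlow i hi
  -- dominators
  set dom : ℕ → ℕ := fun i => if h : i < m then (hMdom i h).choose else 0 with hdomd
  have hdom_spec : ∀ i (h : i < m), dom i ∈ M ∧ Ah i ⊆ Ah (dom i) := by
    intro i h
    simp only [hdomd, dif_pos h]
    obtain ⟨h1, h2⟩ := (hMdom i h).choose_spec
    exact ⟨h1, h2⟩
  -- ancestor band facts
  have hanc_lb' : ∀ i < m, ∀ b : ℕ, cstar * (cstar ^ b * T) < cword c (u i) := by
    intro i hi b
    have h1 := hanc_lb i hi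
    have h2 : cstar ^ b ≤ 1 := pow_le_one₀ hcs0.le hcs1.le
    nlinarith [h1, mul_pos hcs0 hT0, h2, pow_nonneg hcs0.le b]
  have hθub : ∀ b : ℕ, b ≤ Kb → ∀ i < m, cmax ^ n₃ * cword c (u i) ≤ cstar ^ b * T := by
    intro b hb i hi
    have h1 : cword c (u i) ≤ T := hanc_ub i hi
    have h2 : cstar ^ (Kb + 1) ≤ cstar ^ b :=
      pow_le_pow_of_le_one hcs0.le hcs1.le (by omega)
    have h3 : (0:ℝ) < cmax ^ n₃ := pow_pos hcm0 _
    have h4 : 0 < cword c (u i) := cword_pos hc (u i)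
    calc cmax ^ n₃ * cword c (u i) ≤ cmax ^ n₃ * T := by nlinarith
      _ ≤ cstar ^ (Kb + 1) * T := by nlinarith
      _ ≤ cstar ^ b * T := by nlinarith
  -- piece assignment
  have hcovex : ∀ i, i < m → ∃ v, v ∈ coverW c (cstar ^ (band i) * T) n₃ (u (dom i)) ∧
      (A i ∩ Fword F v '' K).Infinite := by
    intro i h
    have hAiinf : (A i).Infinite := img_infinite hc hF hKinf (w i)
    have hAsubdom : A i ⊆ Fword F (u (dom i)) '' K := (hAsub i h).trans (hdom_spec i h).2
    have hcov := coverW_cover (c := c) hself (cstar ^ (band i) * T) n₃ (u (dom i))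
    have hsubU : A i ⊆ ⋃ v ∈ coverW c (cstar ^ (band i) * T) n₃ (u (dom i)), Fword F v '' K := by
      rw [← hcov]
      exact hAsubdom
    obtain ⟨v, hv, hvinf⟩ := pigeon hAiinf hsubU
    exact ⟨v, hv, hvinf⟩
  set π : ℕ → List (Fin N) := fun i => if h : i < m then (hcovex i h).choose else [] with hπd
  have hπ_spec : ∀ i (h : i < m), π i ∈ coverW c (cstar ^ (band i) * T) n₃ (u (dom i)) ∧
      (A i ∩ Fword F (π i) '' K).Infinite := by
    intro i h
    simp only [hπd, dif_pos h]
    exact (hcovex i h).choose_spec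
  -- stage 1 counting
  have hclass : ∀ i ∈ Finset.range m, (dom i, band i) ∈ M ×ˢ Finset.range (Kb + 1) := by
    intro i hi
    rw [Finset.mem_product]
    exact ⟨(hdom_spec i (Finset.mem_range.1 hi)).1,
      Finset.mem_range.2 (by have := hband_le i; omega)⟩
  have hm_eq : m = (Finset.range m).card := by simp
  rw [hm_eq, Finset.card_eq_sum_card_fiberwise hclass]
  have hfiber : ∀ x ∈ M ×ˢ Finset.range (Kb + 1),
      ((Finset.range m).filter (fun i => (dom i, band i) = x)).card ≤ N ^ n₃ * κ₀ := by
    rintro ⟨j, b⟩ hx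
    rw [Finset.mem_product] at hx
    obtain ⟨hjM, hbK⟩ := hx
    have hjm : j < m := hMlt j hjM
    have hbKb : b ≤ Kb := by
      have := Finset.mem_range.1 hbK
      omega
    set θ := cstar ^ b * T with hθd
    have hθ0 : 0 < θ := by positivity
    set fib := (Finset.range m).filter (fun i => (dom i, band i) = (j, b)) with hfibd
    have hfib_lt : ∀ i ∈ fib, i < m := by
      intro i hi
      rw [hfibd, Finset.mem_filter, Finset.mem_range] at hi
      exact hi.1
    have hfib_dom : ∀ i ∈ fib, dom i = j ∧ band i = b := by
      intro i hi
      rw [hfibd, Finset.mem_filter] at hi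
      exact ⟨congrArg Prod.fst hi.2, congrArg Prod.snd hi.2⟩
    have hclass2 : ∀ i ∈ fib, π i ∈ coverW c θ n₃ (u j) := by
      intro i hi
      have h1 := (hπ_spec i (hfib_lt i hi)).1
      rw [(hfib_dom i hi).1, (hfib_dom i hi).2] at h1
      exact h1
    rw [Finset.card_eq_sum_card_fiberwise hclass2]
    have hsubcount : ∀ v ∈ coverW c θ n₃ (u j),
        (fib.filter (fun i => π i = v)).card ≤ κ₀ := by
      intro v hv
      set sf := fib.filter (fun i => π i = v) with hsfd
      have hsf_lt : ∀ i ∈ sf, i < m := fun i hi => hfib_lt i (Finset.mem_of_mem_filter _ hi)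
      have hsf_pi : ∀ i ∈ sf, π i = v := by
        intro i hi
        rw [hsfd, Finset.mem_filter] at hi
        exact hi.2
      have hsf_band : ∀ i ∈ sf, cstar * θ ≤ r i ∧ r i ≤ θ := by
        intro i hi
        have him := hsf_lt i hi
        have hbi := (hfib_dom i (Finset.mem_of_mem_filter _ hi)).2
        constructor
        · have h1 := hband_lb i him
          rw [hbi] at h1
          calc cstar * θ = cstar ^ (b + 1) * T := by rw [hθd]; ring
            _ ≤ r i := h1.le
        · have h1 := hband_ub i him
          rw [hbi] at h1
          exact h1
      have hsf_meet : ∀ i ∈ sf, (A i ∩ Fword F v '' K).Infinite := by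
        intro i hi
        have h1 := (hπ_spec i (hsf_lt i hi)).2
        rw [hsf_pi i hi] at h1
        exact h1
      have hvlb : cstar * θ < cword c v := by
        apply coverW_lower hc hcs hθ0.le hv
        exact hanc_lb' j hjm b
      have hvub : cword c v ≤ θ := by
        apply coverW_upper hc hcm hcm0 hv
        exact hθub b hbKb j hjm
      -- the four cases
      set t1 := sf.filter (fun i => A i = Fword F v '' K) with ht1
      set t2 := sf.filter (fun i => A i ⊆ Fword F v '' K ∧ A i ≠ Fword F v '' K) with ht2
      set t3 := sf.filter (fun i => Fword F v '' K ⊆ A i ∧ A i ≠ Fword F v '' K) with ht3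
      set t4 := sf.filter (fun i => ¬ A i ⊆ Fword F v '' K ∧ ¬ Fword F v '' K ⊆ A i) with ht4
      have hsplit : sf ⊆ ((t1 ∪ t2) ∪ t3) ∪ t4 := by
        intro i hi
        simp only [ht1, ht2, ht3, ht4, Finset.mem_union, Finset.mem_filter]
        by_cases h1 : A i = Fword F v '' K
        · exact Or.inl (Or.inl (Or.inl ⟨hi, h1⟩))
        · by_cases h2 : A i ⊆ Fword F v '' K
          · exact Or.inl (Or.inl (Or.inr ⟨hi, h2, h1⟩))
          · by_cases h3 : Fword F v '' K ⊆ A i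
            · exact Or.inl (Or.inr ⟨hi, h3, h1⟩)
            · exact Or.inr ⟨hi, h2, h3⟩
      have hcard4 : sf.card ≤ t1.card + t2.card + t3.card + t4.card := by
        calc sf.card ≤ (((t1 ∪ t2) ∪ t3) ∪ t4).card := Finset.card_le_card hsplit
          _ ≤ ((t1 ∪ t2) ∪ t3).card + t4.card := Finset.card_union_le _ _
          _ ≤ (t1 ∪ t2).card + t3.card + t4.card := by
              have := Finset.card_union_le (t1 ∪ t2) t3
              omega
          _ ≤ t1.card + t2.card + t3.card + t4.card := by
              have := Finset.card_union_le t1 t2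
              omega
      -- injectivity of words on indices
      have hwinj : ∀ s : Finset ℕ, s ⊆ sf → ∀ i ∈ s, ∀ i' ∈ s, w i = w i' → i = i' := by
        intro s hs i hi i' hi' hww
        by_contra hne
        apply hdist i (hsf_lt i (hs hi)) i' (hsf_lt i' (hs hi')) hne
        show Fword F (w i) '' K = Fword F (w i') '' K
        rw [hww]
      have ht1card : t1.card ≤ 1 := by
        apply Finset.card_le_one.2
        intro a ha b' hb'
        rw [ht1, Finset.mem_filter] at ha hb'
        by_contra hne
        exact hdist a (hsf_lt a ha.1) b' (hsf_lt b' hb'.1) hne (ha.2.trans hb'.2.symm)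
      have himgcard : ∀ s : Finset ℕ, s ⊆ sf → (s.image w).card = s.card := by
        intro s hs
        apply Finset.card_image_of_injOn
        intro i hi i' hi' hww
        exact hwinj s hs i hi i' hi' hww
      have hmemimg : ∀ s : Finset ℕ, ∀ b' ∈ s.image w, ∃ i ∈ s, w i = b' := by
        intro s b' hb'
        rw [Finset.mem_image] at hb'
        obtain ⟨i, hi, hiw⟩ := hb'
        exact ⟨i, hi, hiw⟩
      have ht2card : t2.card ≤ Vnu N L₀ n₂ := by
        have ht2sf : t2 ⊆ sf := Finset.filter_subset _ _
        rw [← himgcard t2 ht2sf]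
        apply nu_bound hc hF hKb hself hcs hcs0 hδ₀ hδc hL₀ hKinf hN0 hcm hcm0 n₂ cstar v
        · exact le_refl cstar
        · exact hn₂.le
        · intro b' hb'
          obtain ⟨i, hi, rfl⟩ := hmemimg t2 b' hb'
          rw [ht2, Finset.mem_filter] at hi
          exact hi.2
        · intro b' hb'
          obtain ⟨i, hi, rfl⟩ := hmemimg t2 b' hb'
          have him := hsf_lt i (ht2sf hi)
          have hbi := (hfib_dom i (Finset.mem_of_mem_filter _ (ht2sf hi))).2
          have h1 := hband_lb i him
          rw [hbi] at h1
          calc cstar * cword c v ≤ cstar * θ := by nlinarith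
            _ = cstar ^ (b + 1) * T := by rw [hθd]; ring
            _ < cword c (w i) := h1
        · intro b' hb' b'' hb'' himg
          obtain ⟨i, hi, rfl⟩ := hmemimg t2 b' hb'
          obtain ⟨i', hi', rfl⟩ := hmemimg t2 b'' hb''
          congr 1
          by_contra hne
          have : i ≠ i' := fun hc' => hne (by rw [hc'])
          exact hdist i (hsf_lt i (ht2sf hi)) i' (hsf_lt i' (ht2sf hi')) this himg
        · intro b' hb' b'' hb'' hne
          obtain ⟨i, hi, rfl⟩ := hmemimg t2 b' hb'
          obtain ⟨i', hi', rfl⟩ := hmemimg t2 b'' hb''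
          have hii : i ≠ i' := fun hc' => hne (by rw [hc'])
          exact hnn i (hsf_lt i (ht2sf hi)) i' (hsf_lt i' (ht2sf hi')) hii
      have ht3card : t3.card ≤ L₀ := by
        have ht3sf : t3 ⊆ sf := Finset.filter_subset _ _
        rw [← himgcard t3 ht3sf]
        apply clique_finset hcs0 hδ₀ hδc hL₀ (t3.image w) θ hθ0
        · intro b' hb'
          obtain ⟨i, hi, rfl⟩ := hmemimg t3 b' hb'
          exact hsf_band i (ht3sf hi)
        · intro b' hb' b'' hb'' himg
          obtain ⟨i, hi, rfl⟩ := hmemimg t3 b' hb'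
          obtain ⟨i', hi', rfl⟩ := hmemimg t3 b'' hb''
          congr 1
          by_contra hne
          have hii : i ≠ i' := fun hc' => hne (by rw [hc'])
          exact hdist i (hsf_lt i (ht3sf hi)) i' (hsf_lt i' (ht3sf hi')) hii himg
        · intro b' hb' b'' hb'' hne
          obtain ⟨i, hi, rfl⟩ := hmemimg t3 b' hb'
          obtain ⟨i', hi', rfl⟩ := hmemimg t3 b'' hb''
          have hii : i ≠ i' := fun hc' => hne (by rw [hc'])
          exact hnn i (hsf_lt i (ht3sf hi)) i' (hsf_lt i' (ht3sf hi')) hii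
        · exact img_infinite hc hF hKinf v
        · intro b' hb'
          obtain ⟨i, hi, rfl⟩ := hmemimg t3 b' hb'
          rw [ht3, Finset.mem_filter] at hi
          exact hi.2.1
      have ht4card : t4.card ≤ L₀ := by
        have ht4sf : t4 ⊆ sf := Finset.filter_subset _ _
        apply Nat.le_of_succ_le
        rw [← himgcard t4 ht4sf]
        apply star_finset hcs0 hδ₀ hδc hL₀ (t4.image w) v θ hθ0
        · exact ⟨hvlb.le, hvub⟩
        · intro b' hb'
          obtain ⟨i, hi, rfl⟩ := hmemimg t4 b' hb'
          exact hsf_band i (ht4sf hi)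
        · intro b' hb' b'' hb'' himg
          obtain ⟨i, hi, rfl⟩ := hmemimg t4 b' hb'
          obtain ⟨i', hi', rfl⟩ := hmemimg t4 b'' hb''
          congr 1
          by_contra hne
          have hii : i ≠ i' := fun hc' => hne (by rw [hc'])
          exact hdist i (hsf_lt i (ht4sf hi)) i' (hsf_lt i' (ht4sf hi')) hii himg
        · intro b' hb' b'' hb'' hne
          obtain ⟨i, hi, rfl⟩ := hmemimg t4 b' hb'
          obtain ⟨i', hi', rfl⟩ := hmemimg t4 b'' hb''
          have hii : i ≠ i' := fun hc' => hne (by rw [hc'])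
          exact hnn i (hsf_lt i (ht4sf hi)) i' (hsf_lt i' (ht4sf hi')) hii
        · intro b' hb'
          obtain ⟨i, hi, rfl⟩ := hmemimg t4 b' hb'
          rw [ht4, Finset.mem_filter] at hi
          intro hcon
          exact hi.2.1 (le_of_eq hcon)
        · intro b' hb'
          obtain ⟨i, hi, rfl⟩ := hmemimg t4 b' hb'
          rw [ht4, Finset.mem_filter] at hi
          exact hi.2.1
        · intro b' hb'
          obtain ⟨i, hi, rfl⟩ := hmemimg t4 b' hb'
          rw [ht4, Finset.mem_filter] at hi
          exact hi.2.2
        · intro b' hb'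
          obtain ⟨i, hi, rfl⟩ := hmemimg t4 b' hb'
          exact hsf_meet i (ht4sf hi)
      calc sf.card ≤ t1.card + t2.card + t3.card + t4.card := hcard4
        _ ≤ 1 + Vnu N L₀ n₂ + L₀ + L₀ := by omega
        _ = κ₀ := hκ₀.symm
    calc ∑ v ∈ coverW c θ n₃ (u j), (fib.filter (fun i => π i = v)).card
        ≤ (coverW c θ n₃ (u j)).card * κ₀ := by
          apply Finset.sum_le_card_nsmul
          intro v hv
          exact hsubcount v hv
      _ ≤ N ^ n₃ * κ₀ := Nat.mul_le_mul_right κ₀ (coverW_card hN0 θ n₃ (u j))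
  calc ∑ x ∈ M ×ˢ Finset.range (Kb + 1),
        ((Finset.range m).filter (fun i => (dom i, band i) = x)).card
      ≤ (M ×ˢ Finset.range (Kb + 1)).card * (N ^ n₃ * κ₀) := by
        apply Finset.sum_le_card_nsmul
        intro x hx
        exact hfiber x hx
    _ = M.card * (Kb + 1) * (N ^ n₃ * κ₀) := by
        rw [Finset.card_product, Finset.card_range]
    _ ≤ L₀ * (Kb + 1) * (N ^ n₃ * κ₀) := by
        apply Nat.mul_le_mul_right
        apply Nat.mul_le_mul_right
        exact hMle


end Chains
end Stmt7

/-- **Proposition 3.7.** For a self-similar set `K` with IFS `{F_i}` of contractive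
similitudes with ratios `c_i` and `c_* = min_i c_i`, the following are equivalent:
(1) there exists `0 < δ ≤ c_*` with `L_δ(K) < ∞`;
(2) for every `0 < δ ≤ c_*`, `L_δ(K) < ∞`. -/
theorem stmt7 {d N : ℕ} (hN : 2 ≤ N) (F : Fin N → Pt d → Pt d) (c : Fin N → ℝ)
    (hc : ∀ i, 0 < c i ∧ c i < 1)
    (hF : ∀ i x y, dist (F i x) (F i y) = c i * dist x y)
    (K : Set (Pt d)) (hKc : IsCompact K) (hKne : K.Nonempty)
    (hself : K = ⋃ i, F i '' K)
    (cstar : ℝ) (hcstar : IsLeast (Set.range c) cstar) :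
    (∃ δ : ℝ, 0 < δ ∧ δ ≤ cstar ∧
      ∃ L : ℕ, ∀ (m : ℕ) (w : ℕ → List (Fin N)), IsDeltaChain F c K δ m w → m ≤ L) ↔
    (∀ δ : ℝ, 0 < δ → δ ≤ cstar →
      ∃ L : ℕ, ∀ (m : ℕ) (w : ℕ → List (Fin N)), IsDeltaChain F c K δ m w → m ≤ L) := by
  have hrange : ∃ i₀ : Fin N, c i₀ = cstar := by
    rcases hcstar.1 with ⟨i₀, h⟩
    exact ⟨i₀, h⟩
  obtain ⟨i₀, hi₀⟩ := hrange
  have hcs0 : 0 < cstar := hi₀ ▸ (hc i₀).1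
  have hcs1 : cstar < 1 := hi₀ ▸ (hc i₀).2
  have hcs : ∀ i, cstar ≤ c i := fun i => hcstar.2 ⟨i, rfl⟩
  constructor
  · rintro ⟨δ₀, hδ₀, hδc, L₀, hL₀⟩ δ hδ hδcs
    have hN0 : 0 < N := by omega
    have hne : (Finset.univ : Finset (Fin N)).Nonempty := ⟨⟨0, hN0⟩, Finset.mem_univ _⟩
    set cmax := Finset.univ.sup' hne c with hcmax
    have hcm : ∀ i, c i ≤ cmax := fun i => Finset.le_sup' c (Finset.mem_univ i)
    have hcm1 : cmax < 1 := by
      apply (Finset.sup'_lt_iff hne).2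
      intro i _
      exact (hc i).2
    have hcm0 : 0 < cmax := lt_of_lt_of_le (hc ⟨0, hN0⟩).1 (hcm _)
    rcases Set.finite_or_infinite K with hfin | hinf
    · refine ⟨1, ?_⟩
      intro m w' hch
      by_contra hcon
      push_neg at hcon
      have h2 : 0 + 1 < m := by omega
      have hinf' := hch.1.2.2 0 h2
      apply hinf'
      apply Set.Finite.subset (hfin.image (Fword F (w' (0 + 1))))
      exact Set.inter_subset_left
    · have hKbnd : Bornology.IsBounded K := hKc.isBounded
      obtain ⟨Λ, hΛ⟩ := Stmt7.main_bound hc hF hKbnd hself hcs hcs0 hcs1 hδ₀ hδc hL₀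
        hinf hN0 hcm hcm0 hcm1 δ hδ
      exact ⟨Λ, hΛ⟩
  · intro h
    exact ⟨cstar, hcs0, le_refl _, h cstar hcs0 (le_refl _)⟩
end
end

section
/- Let a' be a positive real number. The system in the unknowns b', d', e', f', s, r_1 given by f' = 1, d' = b', e' + r_1 + r_1·a' = a', s + s·(1+a')(1+b')/(2(1+a'+b')) = 1, s·e' + s·(1+a')(a'+b')/(2(1+a'+b')) = e', 2s·b' + s + s·(1+b')(a'+b')/(2(1+a'+b')) = b', has a solution with b', d', e', f', s, r_1 all positive if and only if a' > 2; in that case the solution is unique and given by b' = d' = (2+3a')/(a'−2), e' = 1/(2a') + 1/4 + a'/4, f' = 1, s = (2+a')/(4+3a'), r_1 = (−2 − a' + 3a'²)/(4a' + 4a'²). -/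
private lemma uniq14 (a' b' e' s r₁ : ℝ) (ha' : 0 < a') (hb : 0 < b') (he : 0 < e')
    (hs : 0 < s) (hr : 0 < r₁)
    (h3 : e' + r₁ + r₁ * a' = a')
    (h4 : s + s * (1 + a') * (1 + b') / (2 * (1 + a' + b')) = 1)
    (h5 : s * e' + s * (1 + a') * (a' + b') / (2 * (1 + a' + b')) = e')
    (h6 : 2 * s * b' + s + s * (1 + b') * (a' + b') / (2 * (1 + a' + b')) = b') :
    2 < a' ∧ b' = (2 + 3 * a') / (a' - 2) ∧ e' = 1 / (2 * a') + 1 / 4 + a' / 4 ∧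
      s = (2 + a') / (4 + 3 * a') ∧
      r₁ = (-2 - a' + 3 * a' ^ 2) / (4 * a' + 4 * a' ^ 2) := by
  have hD : (0:ℝ) < 2 * (1 + a' + b') := by nlinarith
  have hDne : (2 * (1 + a' + b')) ≠ 0 := ne_of_gt hD
  have h4c := h4
  have h6c := h6
  have hsX : s * (2 * (1 + a' + b') + (1 + a') * (1 + b')) = 2 * (1 + a' + b') := by
    field_simp at h4c; linarith [h4c]
  have hsY : s * (2 * b' * (2 * (1 + a' + b')) + 2 * (1 + a' + b') + (1 + b') * (a' + b'))
      = b' * (2 * (1 + a' + b')) := by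
    field_simp at h6c; linarith [h6c]
  have h7 : b' * (2 * (1 + a' + b')) * (2 * (1 + a' + b') + (1 + a') * (1 + b'))
      = (2 * (1 + a' + b')) * (2 * b' * (2 * (1 + a' + b')) + 2 * (1 + a' + b') + (1 + b') * (a' + b')) := by
    linear_combination (2 * b' * (2 * (1 + a' + b')) + 2 * (1 + a' + b') + (1 + b') * (a' + b')) * hsX
      - (2 * (1 + a' + b') + (1 + a') * (1 + b')) * hsY
  have h8 : (2 * (1 + a' + b')) * ((b' + 1) * ((a' - 2) * b' - (3 * a' + 2))) = 0 := by
    linear_combination h7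
  have hfac : (a' - 2) * b' = 3 * a' + 2 := by
    rcases mul_eq_zero.mp h8 with h | h
    · exact absurd h hDne
    · rcases mul_eq_zero.mp h with h | h
      · nlinarith
      · linarith
  have ha2 : 2 < a' := by nlinarith
  have h1 : a' - 2 ≠ 0 := by linarith
  have h2 : (4:ℝ) + 3 * a' ≠ 0 := by linarith
  have hq : (1 + a') * (a' - 2) + (2 + 3 * a') ≠ 0 := by nlinarith
  have hq' : (1 + a') * (a' - 2) + (2 + a' * 3) ≠ 0 := by nlinarith
  have hq'' : (a' - 2) * (1 + a') + (2 + a' * 3) ≠ 0 := by nlinarith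
  have hb'eq : b' = (2 + 3 * a') / (a' - 2) := by
    field_simp
    linear_combination hfac
  have hs'eq : s = (2 + a') / (4 + 3 * a') := by
    rw [hb'eq] at h4
    field_simp at h4 ⊢
    have h2a : (2 * a') ≠ 0 := by positivity
    have h9 : s * (4 + 3 * a') * (2 * a') = (2 + a') * (2 * a') := by linear_combination h4
    exact mul_right_cancel₀ h2a (by linear_combination h9)
  have he'eq : e' = 1 / (2 * a') + 1 / 4 + a' / 4 := by
    rw [hb'eq, hs'eq] at h5
    field_simp at h5 ⊢
    have hkne : ((1 + a') * (4 + 3 * a') * (a' - 2) * (2 + a')) ≠ 0 := by positivity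
    have h9 : e' * (2 * a' * 4 * 4) * ((1 + a') * (4 + 3 * a') * (a' - 2) * (2 + a'))
        = ((4 + 2 * a') * 4 + a' * (2 * a' * 4)) * ((1 + a') * (4 + 3 * a') * (a' - 2) * (2 + a')) := by
      linear_combination (-8 : ℝ) * (4 + 3 * a') * (a' - 2) * h5
    exact mul_right_cancel₀ hkne (by linear_combination h9 / 4)
  refine ⟨ha2, hb'eq, he'eq, hs'eq, ?_⟩
  have he4 : e' * (4 * a') = a' ^ 2 + a' + 2 := by
    rw [he'eq]; field_simp; ring
  have hden : (4 * a' + 4 * a' ^ 2) ≠ 0 := by positivity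
  rw [eq_div_iff hden]
  linear_combination 4 * a' * h3 - he4

/-- **Theorem 5.7 (homogeneous regular harmonic structures on the overlapping gasket
with open bottom).** Let `a' > 0`. The system
`f' = 1`, `d' = b'`, `e' + r₁ + r₁·a' = a'`,
`s + s(1+a')(1+b')/(2(1+a'+b')) = 1`,
`s·e' + s(1+a')(a'+b')/(2(1+a'+b')) = e'`,
`2s·b' + s + s(1+b')(a'+b')/(2(1+a'+b')) = b'`
has a solution with `b', d', e', f', s, r₁` all positive iff `a' > 2`; in that case the
solution is unique, given by `b' = d' = (2+3a')/(a'−2)`, `e' = 1/(2a') + 1/4 + a'/4`,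
`f' = 1`, `s = (2+a')/(4+3a')`, `r₁ = (−2−a'+3a'²)/(4a'+4a'²)`. -/
theorem stmt14 (a' : ℝ) (ha' : 0 < a') :
    ((∃ b' d' e' f' s r₁ : ℝ,
        0 < b' ∧ 0 < d' ∧ 0 < e' ∧ 0 < f' ∧ 0 < s ∧ 0 < r₁ ∧
        f' = 1 ∧ d' = b' ∧ e' + r₁ + r₁ * a' = a' ∧
        s + s * (1 + a') * (1 + b') / (2 * (1 + a' + b')) = 1 ∧
        s * e' + s * (1 + a') * (a' + b') / (2 * (1 + a' + b')) = e' ∧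
        2 * s * b' + s + s * (1 + b') * (a' + b') / (2 * (1 + a' + b')) = b') ↔
      2 < a') ∧
    (∀ b' d' e' f' s r₁ : ℝ,
        0 < b' → 0 < d' → 0 < e' → 0 < f' → 0 < s → 0 < r₁ →
        f' = 1 → d' = b' → e' + r₁ + r₁ * a' = a' →
        s + s * (1 + a') * (1 + b') / (2 * (1 + a' + b')) = 1 →
        s * e' + s * (1 + a') * (a' + b') / (2 * (1 + a' + b')) = e' →
        2 * s * b' + s + s * (1 + b') * (a' + b') / (2 * (1 + a' + b')) = b' →
        b' = (2 + 3 * a') / (a' - 2) ∧ d' = (2 + 3 * a') / (a' - 2) ∧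
        e' = 1 / (2 * a') + 1 / 4 + a' / 4 ∧ f' = 1 ∧
        s = (2 + a') / (4 + 3 * a') ∧
        r₁ = (-2 - a' + 3 * a' ^ 2) / (4 * a' + 4 * a' ^ 2)) := by
  constructor
  · constructor
    · rintro ⟨b', d', e', f', s, r₁, hb, hd, he, hf, hs, hr, hf1, hdb, h3, h4, h5, h6⟩
      exact (uniq14 a' b' e' s r₁ ha' hb he hs hr h3 h4 h5 h6).1
    · intro ha2
      have h1 : a' - 2 ≠ 0 := by linarith
      have h2 : (4:ℝ) + 3 * a' ≠ 0 := by linarith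
      have hq : (1 + a') * (a' - 2) + (2 + 3 * a') ≠ 0 := by nlinarith
      have hq' : (1 + a') * (a' - 2) + (2 + a' * 3) ≠ 0 := by nlinarith
      have hq'' : (a' - 2) * (1 + a') + (2 + a' * 3) ≠ 0 := by nlinarith
      refine ⟨(2 + 3 * a') / (a' - 2), (2 + 3 * a') / (a' - 2),
        1 / (2 * a') + 1 / 4 + a' / 4, 1, (2 + a') / (4 + 3 * a'),
        (-2 - a' + 3 * a' ^ 2) / (4 * a' + 4 * a' ^ 2), ?_, ?_, ?_, ?_, ?_, ?_, rfl, rfl,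
        ?_, ?_, ?_, ?_⟩
      · exact div_pos (by linarith) (by linarith)
      · exact div_pos (by linarith) (by linarith)
      · positivity
      · norm_num
      · positivity
      · exact div_pos (by nlinarith) (by positivity)
      · field_simp
        ring
      · field_simp
        ring
      · field_simp
        ring
      · field_simp
        ring
  · intro b' d' e' f' s r₁ hb hd he hf hs hr hf1 hdb h3 h4 h5 h6
    obtain ⟨ha2, h1, h2, h3', h4'⟩ := uniq14 a' b' e' s r₁ ha' hb he hs hr h3 h4 h5 h6
    exact ⟨h1, hdb.trans h1, h2, hf1, h3', h4'⟩
end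

section
/- The system of equations in positive real numbers a, b, c, d, e, r given by r·(2a+b+c+d) = a+b, r·(4a+4c) = a+c, r·(2a+b+3c+d) = b+c, d = r·(2b + 2d + (a+b+2c+e)/2), and r·(2a+b+c+d + 2/((a+b+2c+e)^{-1} + (a+b+e)^{-1})) = e, has exactly the one-parameter family of solutions r = 1/4, c = 2a, b = (13+√73)a/16, d = 3(13+√73)a/16, e = (11+7√73)a/16, for arbitrary a > 0. -/
/-- **Theorem 5.8 (the rotationally symmetric homogeneous regular harmonic structure on
the Vicsek windmill set).** The system in positive reals `a, b, c, d, e, r` given by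
`r(2a+b+c+d) = a+b`, `r(4a+4c) = a+c`, `r(2a+b+3c+d) = b+c`,
`d = r(2b+2d+(a+b+2c+e)/2)`, and
`r(2a+b+c+d + 2/((a+b+2c+e)⁻¹+(a+b+e)⁻¹)) = e`
has exactly the one-parameter family of solutions `r = 1/4`, `c = 2a`,
`b = (13+√73)a/16`, `d = 3(13+√73)a/16`, `e = (11+7√73)a/16`, for arbitrary `a > 0`. -/
theorem stmt15 (a b c d e r : ℝ) (ha : 0 < a) (hb : 0 < b) (hc : 0 < c)
    (hd : 0 < d) (he : 0 < e) (hr : 0 < r) :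
    (r * (2*a + b + c + d) = a + b ∧
     r * (4*a + 4*c) = a + c ∧
     r * (2*a + b + 3*c + d) = b + c ∧
     d = r * (2*b + 2*d + (a + b + 2*c + e) / 2) ∧
     r * (2*a + b + c + d + 2 / ((a + b + 2*c + e)⁻¹ + (a + b + e)⁻¹)) = e) ↔
    (r = 1/4 ∧ c = 2*a ∧ b = (13 + Real.sqrt 73) * a / 16 ∧
     d = 3 * (13 + Real.sqrt 73) * a / 16 ∧
     e = (11 + 7 * Real.sqrt 73) * a / 16) := by
  set s := Real.sqrt 73 with hsdef
  have hs : s ^ 2 = 73 := Real.sq_sqrt (by norm_num)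
  have hs8 : 8 < s := by
    nlinarith [Real.sqrt_nonneg (73:ℝ), hs]
  constructor
  · rintro ⟨h1, h2, h3, h4, h5⟩
    have hr4 : r = 1/4 := by
      have hac : (0:ℝ) < a + c := by linarith
      have : (r - 1/4) * (4 * (a + c)) = 0 := by linarith
      rcases mul_eq_zero.1 this with h | h
      · linarith
      · linarith
    subst hr4
    have hc2 : c = 2 * a := by linarith
    subst hc2
    have hd3 : d = 3 * b := by linarith
    subst hd3
    have he7 : e = 7 * b - 5 * a := by linarith
    subst he7
    -- now work with h5
    have hP : (0:ℝ) < a + b + 2 * (2*a) + (7*b - 5*a) := by linarith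
    have hQ : (0:ℝ) < a + b + (7*b - 5*a) := by linarith
    have hq : 8 * b ^ 2 - 13 * a * b + 3 * a ^ 2 = 0 := by
      have hPe : a + b + 2 * (2*a) + (7*b - 5*a) = 8 * b := by ring
      have hQe : a + b + (7*b - 5*a) = 8 * b - 4 * a := by ring
      rw [hPe, hQe] at h5
      rw [hPe] at hP
      rw [hQe] at hQ
      have hk : 2 / ((8*b)⁻¹ + (8*b-4*a)⁻¹) = 16*b*(8*b-4*a)/(16*b-4*a) := by
        rw [div_eq_div_iff (ne_of_gt (add_pos (inv_pos.2 hP) (inv_pos.2 hQ))) (ne_of_gt (by linarith))]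
        have i1 : 8*b*(8*b)⁻¹ = 1 := mul_inv_cancel₀ hP.ne'
        have i2 : (8*b-4*a)*(8*b-4*a)⁻¹ = 1 := mul_inv_cancel₀ hQ.ne'
        linear_combination (-2*(8*b-4*a)) * i1 + (-16*b) * i2
      rw [hk] at h5
      have hm : 16*b*(8*b-4*a)/(16*b-4*a) * (16*b-4*a) = 16*b*(8*b-4*a) :=
        div_mul_cancel₀ _ (ne_of_gt (by linarith))
      linear_combination (hm - 4*(16*b-4*a)*h5)/32
    have hfac : (16 * b - (13 + s) * a) * (16 * b - (13 - s) * a) = 0 := by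
      linear_combination 32 * hq - a ^ 2 * hs
    have hb' : 16 * b - (13 + s) * a = 0 := by
      rcases mul_eq_zero.1 hfac with h | h
      · exact h
      · exfalso
        -- then e = (11 - 7s)a/16 < 0
        nlinarith [he, ha]
    refine ⟨rfl, rfl, ?_, ?_, ?_⟩
    · linarith [hb']
    · linarith [hb']
    · linear_combination 7/16 * hb'
  · rintro ⟨hr4, hc2, hb', hd', he'⟩
    subst hr4 hc2 hb' hd' he'
    have hP : a + (13 + s) * a / 16 + 2 * (2*a) + (11 + 7*s) * a / 16 = (13 + s) * a / 2 := by ring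
    have hQ : a + (13 + s) * a / 16 + (11 + 7*s) * a / 16 = (5 + s) * a / 2 := by ring
    have hPpos : (0:ℝ) < (13 + s) * a / 2 := by positivity
    have hQpos : (0:ℝ) < (5 + s) * a / 2 := by positivity
    refine ⟨by ring, by ring, by ring, by ring, ?_⟩
    rw [hP, hQ]
    have h1 : ((13 + s) * a / 2)⁻¹ + ((5 + s) * a / 2)⁻¹ = (9 + s) * 4 / ((13 + s) * (5 + s) * a) := by
      rw [inv_eq_one_div, inv_eq_one_div, div_add_div _ _ (by positivity) (by positivity)]
      rw [div_eq_div_iff (by positivity) (by positivity)]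
      ring
    rw [h1]
    have h9 : ((9:ℝ) + s) * 4 ≠ 0 := by positivity
    rw [div_div_eq_mul_div]
    field_simp
    linear_combination (-64) * hs
end

section
/- Let G = (S,E) be a finite strongly connected directed graph with a distinguished vertex s_0, and let r : E → (0,∞) and c : E → (0,1) be edge weights, extended multiplicatively to walks (r_{e_1⋯e_m} = ∏_k r_{e_k} and c_{e_1⋯e_m} = ∏_k c_{e_k}). Assume the homogeneity condition: for any two walks e and e' starting at s_0 with the same terminal vertex and c_e = c_{e'}, one has r_e = r_{e'}. Then for any vertices s, t and any walks α, β from s_0 to s and α', β' from s_0 to t with c_α/c_β = c_{α'}/c_{β'}, one has r_α/r_β = r_{α'}/r_{β'}; that is, the ratio r_α/r_β for two walks from s_0 to a common vertex depends only on the ratio c_α/c_β. -/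
/-- `w : Fin (m+1) → E` is a walk from `s` to `t` in the directed graph with edge
endpoint maps `src`, `tgt`. -/
def IsWalkFromTo {S E : Type*} (src tgt : E → S) (s t : S) (m : ℕ)
    (w : Fin (m + 1) → E) : Prop :=
  (∀ k : Fin m, tgt (w k.castSucc) = src (w k.succ)) ∧
  src (w 0) = s ∧ tgt (w (Fin.last m)) = t

def wappend {E : Type} {m n : ℕ} (w1 : Fin (m + 1) → E) (w2 : Fin (n + 1) → E) :
    Fin (m + n + 1 + 1) → E :=
  fun i => if h : (i : ℕ) < m + 1 then w1 ⟨i, h⟩ else w2 ⟨(i : ℕ) - (m + 1), by omega⟩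

lemma wappend_prod {E : Type} {m n : ℕ} (f : E → ℝ) (w1 : Fin (m + 1) → E)
    (w2 : Fin (n + 1) → E) :
    ∏ k, f (wappend w1 w2 k) = (∏ k, f (w1 k)) * ∏ k, f (w2 k) := by
  rw [← Equiv.prod_comp (finCongr (show (m + 1) + (n + 1) = m + n + 1 + 1 by ring))
      (fun k => f (wappend w1 w2 k)), Fin.prod_univ_add]
  congr 1
  · apply Finset.prod_congr rfl
    intro i _
    have : (i : ℕ) < m + 1 := i.isLt
    simp [wappend, this]
  · apply Finset.prod_congr rfl
    intro i _
    have h1 : ¬ ((m + 1 + (i : ℕ)) < m + 1) := by omega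
    have h2 : m + 1 + (i : ℕ) - (m + 1) = i := by omega
    simp [wappend, Fin.natAdd, h1, h2]

lemma wappend_walk {S E : Type} (src tgt : E → S) {s u t : S} {m n : ℕ}
    {w1 : Fin (m + 1) → E} {w2 : Fin (n + 1) → E}
    (h1 : IsWalkFromTo src tgt s u m w1) (h2 : IsWalkFromTo src tgt u t n w2) :
    IsWalkFromTo src tgt s t (m + n + 1) (wappend w1 w2) := by
  obtain ⟨h1a, h1b, h1c⟩ := h1
  obtain ⟨h2a, h2b, h2c⟩ := h2
  refine ⟨?_, ?_, ?_⟩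
  · intro k
    rcases lt_trichotomy (k : ℕ) m with hk | hk | hk
    · have hc : ((k.castSucc : Fin (m+n+1+1)) : ℕ) < m + 1 := by
        simp; omega
      have hs : ((k.succ : Fin (m+n+1+1)) : ℕ) < m + 1 := by
        simp; omega
      simp only [wappend, dif_pos hc, dif_pos hs]
      have := h1a ⟨k, hk⟩
      convert this using 3 <;> (try simp [Fin.ext_iff]) <;> (try omega)
    · have hc : ((k.castSucc : Fin (m+n+1+1)) : ℕ) < m + 1 := by simp; omega
      have hs : ¬ ((k.succ : Fin (m+n+1+1)) : ℕ) < m + 1 := by simp; omega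
      simp only [wappend, dif_pos hc, dif_neg hs]
      have e1 : (⟨((k.castSucc : Fin (m+n+1+1)) : ℕ), hc⟩ : Fin (m+1)) = Fin.last m := by
        simp [Fin.ext_iff]; omega
      have e2 : (⟨((k.succ : Fin (m+n+1+1)) : ℕ) - (m+1), by omega⟩ : Fin (n+1)) = 0 := by
        simp [Fin.ext_iff]; omega
      rw [e1, e2, h1c, h2b]
    · have hc : ¬ ((k.castSucc : Fin (m+n+1+1)) : ℕ) < m + 1 := by simp; omega
      have hs : ¬ ((k.succ : Fin (m+n+1+1)) : ℕ) < m + 1 := by simp; omega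
      simp only [wappend, dif_neg hc, dif_neg hs]
      have hk2 : (k : ℕ) - (m + 1) < n := by omega
      have := h2a ⟨(k : ℕ) - (m + 1), hk2⟩
      convert this using 3 <;> (try simp [Fin.ext_iff]) <;> (try omega)
  · have h0 : ((0 : Fin (m+n+1+1)) : ℕ) < m + 1 := by simp
    simp only [wappend, dif_pos h0]
    convert h1b using 2
    exact congrArg w1 (Fin.ext (by simp))
  · have hl : ¬ ((Fin.last (m+n+1) : Fin (m+n+1+1)) : ℕ) < m + 1 := by simp
    simp only [wappend, dif_neg hl]
    have : (⟨((Fin.last (m+n+1)) : ℕ) - (m+1), by omega⟩ : Fin (n+1)) = Fin.last n := by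
      simp [Fin.ext_iff]
    rw [this, h2c]

/-- **Proposition 6.2.** Let `G = (S,E)` be a finite strongly connected directed graph
with a distinguished vertex `s₀`, and let `r : E → (0,∞)` and `c : E → (0,1)` be edge
weights extended multiplicatively to walks. Assume homogeneity: any two walks from
`s₀` with the same terminal vertex and the same `c`-product have the same `r`-product.
Then for walks `α, β` from `s₀` to `s` and `α', β'` from `s₀` to `t` with
`c_α/c_β = c_{α'}/c_{β'}`, one has `r_α/r_β = r_{α'}/r_{β'}`: the ratio `r_α/r_β`
depends only on the ratio `c_α/c_β`. -/
theorem stmt16 {S E : Type} [Finite S] [Finite E] (src tgt : E → S) (s₀ : S)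
    (hsc : ∀ s t : S, ∃ (m : ℕ) (w : Fin (m + 1) → E), IsWalkFromTo src tgt s t m w)
    (r : E → ℝ) (hr : ∀ e, 0 < r e)
    (c : E → ℝ) (hc : ∀ e, 0 < c e ∧ c e < 1)
    (hhom : ∀ (t : S) (m m' : ℕ) (w : Fin (m + 1) → E) (w' : Fin (m' + 1) → E),
        IsWalkFromTo src tgt s₀ t m w → IsWalkFromTo src tgt s₀ t m' w' →
        (∏ k, c (w k)) = (∏ k, c (w' k)) → (∏ k, r (w k)) = (∏ k, r (w' k))) :
    ∀ (s t : S) (m₁ m₂ m₃ m₄ : ℕ) (α : Fin (m₁ + 1) → E) (β : Fin (m₂ + 1) → E)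
      (α' : Fin (m₃ + 1) → E) (β' : Fin (m₄ + 1) → E),
      IsWalkFromTo src tgt s₀ s m₁ α → IsWalkFromTo src tgt s₀ s m₂ β →
      IsWalkFromTo src tgt s₀ t m₃ α' → IsWalkFromTo src tgt s₀ t m₄ β' →
      (∏ k, c (α k)) / (∏ k, c (β k)) = (∏ k, c (α' k)) / (∏ k, c (β' k)) →
      (∏ k, r (α k)) / (∏ k, r (β k)) = (∏ k, r (α' k)) / (∏ k, r (β' k)) := by
  intro s t m₁ m₂ m₃ m₄ α β α' β' hα hβ hα' hβ' hcc
  obtain ⟨m₀, γ, hγ⟩ := hsc s s₀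
  have cpos : ∀ {N : ℕ} (w : Fin (N + 1) → E), 0 < ∏ k, c (w k) :=
    fun w => Finset.prod_pos (fun i _ => (hc _).1)
  have rpos : ∀ {N : ℕ} (w : Fin (N + 1) → E), 0 < ∏ k, r (w k) :=
    fun w => Finset.prod_pos (fun i _ => hr _)
  -- two big walks
  have hw1 := wappend_walk src tgt (wappend_walk src tgt hα hγ) hβ'
  have hw2 := wappend_walk src tgt (wappend_walk src tgt hβ hγ) hα'
  have hceq : (∏ k, c (wappend (wappend α γ) β' k)) = ∏ k, c (wappend (wappend β γ) α' k) := by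
    rw [wappend_prod, wappend_prod, wappend_prod, wappend_prod]
    have := (div_eq_div_iff (cpos β).ne' (cpos β').ne').mp hcc
    nlinarith [cpos γ, this]
  have hreq := hhom t _ _ _ _ hw1 hw2 hceq
  rw [wappend_prod, wappend_prod, wappend_prod, wappend_prod] at hreq
  rw [div_eq_div_iff (rpos β).ne' (rpos β').ne']
  nlinarith [rpos γ, (rpos γ).ne']
end
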